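/- arXiv:2512.06794 — 3 statements merged into one kernel-verified Lean document; each statement's English description precedes it below -/
import Mathlib

section
/- For every probability vector π on K that is invariant for M (i.e., πM = π), the trajectory δ ↦ v_δ(π) is non-increasing on [0,1): for all δ₁, δ₂ with 0 ≤ δ₁ ≤ δ₂ < 1 one has v_{δ₂}(π) ≤ v_{δ₁}(π). -/
open scoped BigOperators

noncomputable section

/-- A row-stochastic matrix: nonnegative entries, rows summing to 1. -/
def IsStochastic {K : Type*} [Fintype K] (M : Matrix K K ℝ) : Prop :=
  (∀ i j, 0 ≤ M i j) ∧ ∀ i, ∑ j, M i j = 1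

/-- A split of `ξ`: a countable family of weights `α` and beliefs `ξs` with
`α s ≥ 0`, `ξs s ∈ Δ(K)`, `∑ α = 1` and `∑ α_s ξ_s = ξ`. -/
def IsSplit {K : Type*} [Fintype K] (ξ : K → ℝ) (α : ℕ → ℝ) (ξs : ℕ → K → ℝ) : Prop :=
  (∀ s, 0 ≤ α s) ∧ (∀ s, ξs s ∈ stdSimplex ℝ K) ∧ (∑' s, α s) = 1 ∧
    ∀ ℓ : K, (∑' s, α s * ξs s ℓ) = ξ ℓ

/-- The one-stage payoff of a split in the δ-discounted Bellman equation. -/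
def splitPayoff {K : Type*} [Fintype K] (M : Matrix K K ℝ) (u : (K → ℝ) → ℝ) (δ : ℝ)
    (w : (K → ℝ) → ℝ) (α : ℕ → ℝ) (ξs : ℕ → K → ℝ) : ℝ :=
  ∑' s, α s * ((1 - δ) * u (ξs s) + δ * w (Matrix.vecMul (ξs s) M))

/-- `v` is the family of δ-discounted values of the Markovian persuasion game:
for each `δ ∈ [0,1)`, `v δ` is bounded between `0` and `C = ‖u‖∞` on `Δ(K)` and
satisfies the Bellman equation there. -/
def IsValueFamily {K : Type*} [Fintype K] (M : Matrix K K ℝ) (u : (K → ℝ) → ℝ) (C : ℝ)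
    (v : ℝ → (K → ℝ) → ℝ) : Prop :=
  ∀ δ ∈ Set.Ico (0 : ℝ) 1,
    (∀ ξ ∈ stdSimplex ℝ K, 0 ≤ v δ ξ ∧ v δ ξ ≤ C) ∧
    ∀ ξ ∈ stdSimplex ℝ K,
      v δ ξ = sSup { r : ℝ | ∃ α ξs, IsSplit ξ α ξs ∧ r = splitPayoff M u δ (v δ) α ξs }

section MPAux

lemma MP.weights_summable {α : ℕ → ℝ} (h : (∑' s, α s) = 1) : Summable α := by
  by_contra hs
  rw [tsum_eq_zero_of_not_summable hs] at h
  norm_num at h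

lemma MP.combo_summable {α g : ℕ → ℝ} (hα0 : ∀ s, 0 ≤ α s) (hα : Summable α)
    {C : ℝ} (hg : ∀ s, g s ≤ C) (hg0 : ∀ s, 0 ≤ g s) :
    Summable (fun s => α s * g s) :=
  Summable.of_nonneg_of_le (fun s => mul_nonneg (hα0 s) (hg0 s))
    (fun s => mul_le_mul_of_nonneg_left (hg s) (hα0 s)) (hα.mul_right C)

lemma MP.combo_le {α g : ℕ → ℝ} (hα0 : ∀ s, 0 ≤ α s) (hα1 : (∑' s, α s) = 1)
    {C : ℝ} (hg : ∀ s, g s ≤ C) (hg0 : ∀ s, 0 ≤ g s) :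
    (∑' s, α s * g s) ≤ C := by
  have hα := MP.weights_summable hα1
  calc (∑' s, α s * g s) ≤ ∑' s, α s * C :=
        Summable.tsum_le_tsum (fun s => mul_le_mul_of_nonneg_left (hg s) (hα0 s))
          (MP.combo_summable hα0 hα hg hg0) (hα.mul_right C)
    _ = C := by rw [tsum_mul_right, hα1, one_mul]

lemma MP.tsum_pair {f : ℕ → ℕ → ℝ} (hf : ∀ s t, 0 ≤ f s t)
    (hrow : ∀ s, Summable (f s)) (hcol : Summable (fun s => ∑' t, f s t)) :
    Summable (fun n => f (Nat.unpair n).1 (Nat.unpair n).2) ∧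
      (∑' n, f (Nat.unpair n).1 (Nat.unpair n).2) = ∑' s, ∑' t, f s t := by
  set F : ℕ × ℕ → ℝ := fun p => f p.1 p.2 with hF
  have hFs : Summable F := by
    rw [summable_prod_of_nonneg (fun p => hf p.1 p.2)]
    exact ⟨fun s => hrow s, hcol⟩
  have he : ∀ n : ℕ, F (Nat.pairEquiv.symm n) = f (Nat.unpair n).1 (Nat.unpair n).2 := by
    intro n; rfl
  constructor
  · have := (Nat.pairEquiv.symm.summable_iff (f := F)).mpr hFs
    exact this
  · have h1 : (∑' n, F (Nat.pairEquiv.symm n)) = ∑' p, F p := Nat.pairEquiv.symm.tsum_eq F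
    have h2 : (∑' p, F p) = ∑' s, ∑' t, f s t := Summable.tsum_prod' hFs hrow
    calc (∑' n, f (Nat.unpair n).1 (Nat.unpair n).2) = ∑' n, F (Nat.pairEquiv.symm n) := by
          exact tsum_congr fun n => (he n).symm
      _ = ∑' s, ∑' t, f s t := by rw [h1, h2]

lemma MP.tsum_combo_add {α A B : ℕ → ℝ} (c d : ℝ)
    (hA : Summable (fun s => α s * A s)) (hB : Summable (fun s => α s * B s)) :
    (∑' s, α s * (c * A s + d * B s)) =
      c * (∑' s, α s * A s) + d * (∑' s, α s * B s) := by
  have h : ∀ s, α s * (c * A s + d * B s) = c * (α s * A s) + d * (α s * B s) := by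
    intro s; ring
  simp_rw [h]
  rw [Summable.tsum_add (hA.mul_left c) (hB.mul_left d), tsum_mul_left, tsum_mul_left]

variable {K : Type*} [Fintype K]

lemma MP.coord_nonneg {ξ : K → ℝ} (hξ : ξ ∈ stdSimplex ℝ K) (j : K) : 0 ≤ ξ j := hξ.1 j

lemma MP.coord_le_one {ξ : K → ℝ} (hξ : ξ ∈ stdSimplex ℝ K) (j : K) : ξ j ≤ 1 := by
  have := hξ.2
  calc ξ j ≤ ∑ i, ξ i := Finset.single_le_sum (fun i _ => hξ.1 i) (Finset.mem_univ j)
    _ = 1 := hξ.2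

lemma MP.vecMul_mem {M : Matrix K K ℝ} (hM : IsStochastic M)
    {ξ : K → ℝ} (hξ : ξ ∈ stdSimplex ℝ K) : Matrix.vecMul ξ M ∈ stdSimplex ℝ K := by
  constructor
  · intro j
    simp only [Matrix.vecMul, dotProduct]
    exact Finset.sum_nonneg fun i _ => mul_nonneg (hξ.1 i) (hM.1 i j)
  · have h : ∑ j, Matrix.vecMul ξ M j = ∑ i, ξ i * ∑ j, M i j := by
      simp only [Matrix.vecMul, dotProduct, Finset.mul_sum]
      rw [Finset.sum_comm]
    rw [h]
    simp_rw [hM.2]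
    simpa using hξ.2

lemma MP.trivSplit {ξ : K → ℝ} (hξ : ξ ∈ stdSimplex ℝ K) :
    IsSplit ξ (fun s => if s = 0 then 1 else 0) (fun _ => ξ) := by
  refine ⟨fun s => by positivity, fun _ => hξ, by rw [tsum_ite_eq], fun ℓ => ?_⟩
  have h : ∀ s : ℕ, (if s = 0 then (1:ℝ) else 0) * ξ ℓ = if s = 0 then ξ ℓ else 0 := by
    intro s; split <;> simp
  simp_rw [h]
  rw [tsum_ite_eq]

/-- Pushforward of a split's barycenter through `M`. -/
lemma MP.bary_vecMul {M : Matrix K K ℝ} {ξ : K → ℝ} {α : ℕ → ℝ} {ξs : ℕ → K → ℝ}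
    (hM : IsStochastic M) (hsp : IsSplit ξ α ξs) (ℓ : K) :
    (∑' s, α s * Matrix.vecMul (ξs s) M ℓ) = Matrix.vecMul ξ M ℓ := by
  obtain ⟨hα0, hmem, hα1, hbar⟩ := hsp
  have hexp : ∀ s, α s * Matrix.vecMul (ξs s) M ℓ = ∑ j, α s * ξs s j * M j ℓ := by
    intro s
    simp only [Matrix.vecMul, dotProduct, Finset.mul_sum]
    congr 1; ext j; ring
  simp_rw [hexp]
  rw [Summable.tsum_finsetSum (fun j _ => ?_)]
  · have : ∀ j : K, (∑' s, α s * ξs s j * M j ℓ) = ξ j * M j ℓ := by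
      intro j
      rw [← hbar j, ← tsum_mul_right]
    simp_rw [this]
    simp only [Matrix.vecMul, dotProduct]
  · -- summability of fun s => α s * ξs s j * M j ℓ
    have : Summable (fun s => α s * ξs s j) :=
      MP.combo_summable hα0 (MP.weights_summable hα1)
        (fun s => MP.coord_le_one (hmem s) j) (fun s => MP.coord_nonneg (hmem s) j)
    exact this.mul_right _

end MPAux

section Bellman

variable {K : Type*} [Fintype K] [Nonempty K] {M : Matrix K K ℝ} {u : (K → ℝ) → ℝ}
  {C : ℝ} {v : ℝ → (K → ℝ) → ℝ} {δ : ℝ}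

lemma MP.u_bounds (hu0 : ∀ ξ ∈ stdSimplex ℝ K, 0 ≤ u ξ) (hC : IsLUB (u '' stdSimplex ℝ K) C)
    {ξ : K → ℝ} (hξ : ξ ∈ stdSimplex ℝ K) : 0 ≤ u ξ ∧ u ξ ≤ C :=
  ⟨hu0 ξ hξ, hC.1 (Set.mem_image_of_mem u hξ)⟩

lemma MP.C_nonneg (hu0 : ∀ ξ ∈ stdSimplex ℝ K, 0 ≤ u ξ) (hC : IsLUB (u '' stdSimplex ℝ K) C) :
    0 ≤ C := by
  classical
  have hξ := ite_eq_mem_stdSimplex ℝ (Classical.arbitrary K)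
  exact le_trans (hu0 _ hξ) ((MP.u_bounds hu0 hC hξ).2)

lemma MP.stage_bounds (hM : IsStochastic M) (hu0 : ∀ ξ ∈ stdSimplex ℝ K, 0 ≤ u ξ)
    (hC : IsLUB (u '' stdSimplex ℝ K) C) (hv : IsValueFamily M u C v)
    (hδ : δ ∈ Set.Ico (0:ℝ) 1) {ξ : K → ℝ} (hξ : ξ ∈ stdSimplex ℝ K) :
    0 ≤ (1 - δ) * u ξ + δ * v δ (Matrix.vecMul ξ M) ∧
      (1 - δ) * u ξ + δ * v δ (Matrix.vecMul ξ M) ≤ C := by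
  obtain ⟨hu1, hu2⟩ := MP.u_bounds hu0 hC hξ
  obtain ⟨hv1, hv2⟩ := (hv δ hδ).1 _ (MP.vecMul_mem hM hξ)
  have h1 : (0:ℝ) ≤ 1 - δ := by linarith [hδ.2]
  constructor
  · exact add_nonneg (mul_nonneg h1 hu1) (mul_nonneg hδ.1 hv1)
  · nlinarith [hδ.1, hδ.2]

lemma MP.payoff_bounds (hM : IsStochastic M) (hu0 : ∀ ξ ∈ stdSimplex ℝ K, 0 ≤ u ξ)
    (hC : IsLUB (u '' stdSimplex ℝ K) C) (hv : IsValueFamily M u C v)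
    (hδ : δ ∈ Set.Ico (0:ℝ) 1) {ξ : K → ℝ} {α : ℕ → ℝ} {ξs : ℕ → K → ℝ}
    (hsp : IsSplit ξ α ξs) :
    Summable (fun s => α s * ((1 - δ) * u (ξs s) + δ * v δ (Matrix.vecMul (ξs s) M))) ∧
      0 ≤ splitPayoff M u δ (v δ) α ξs ∧ splitPayoff M u δ (v δ) α ξs ≤ C := by
  obtain ⟨hα0, hmem, hα1, hbar⟩ := hsp
  have hb := fun s => MP.stage_bounds hM hu0 hC hv hδ (hmem s)
  refine ⟨MP.combo_summable hα0 (MP.weights_summable hα1) (fun s => (hb s).2) (fun s => (hb s).1),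
    tsum_nonneg (fun s => mul_nonneg (hα0 s) (hb s).1),
    MP.combo_le hα0 hα1 (fun s => (hb s).2) (fun s => (hb s).1)⟩

lemma MP.bellman_bddAbove (hM : IsStochastic M) (hu0 : ∀ ξ ∈ stdSimplex ℝ K, 0 ≤ u ξ)
    (hC : IsLUB (u '' stdSimplex ℝ K) C) (hv : IsValueFamily M u C v)
    (hδ : δ ∈ Set.Ico (0:ℝ) 1) (ξ : K → ℝ) :
    C ∈ upperBounds { r : ℝ | ∃ α ξs, IsSplit ξ α ξs ∧ r = splitPayoff M u δ (v δ) α ξs } := by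
  rintro r ⟨α, ξs, hsp, rfl⟩
  exact (MP.payoff_bounds hM hu0 hC hv hδ hsp).2.2

lemma MP.payoff_le_v (hM : IsStochastic M) (hu0 : ∀ ξ ∈ stdSimplex ℝ K, 0 ≤ u ξ)
    (hC : IsLUB (u '' stdSimplex ℝ K) C) (hv : IsValueFamily M u C v)
    (hδ : δ ∈ Set.Ico (0:ℝ) 1) {ξ : K → ℝ} (hξ : ξ ∈ stdSimplex ℝ K)
    {α : ℕ → ℝ} {ξs : ℕ → K → ℝ} (hsp : IsSplit ξ α ξs) :
    splitPayoff M u δ (v δ) α ξs ≤ v δ ξ := by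
  rw [(hv δ hδ).2 ξ hξ]
  exact le_csSup ⟨C, MP.bellman_bddAbove hM hu0 hC hv hδ ξ⟩ ⟨α, ξs, hsp, rfl⟩

lemma MP.exists_split_near (hM : IsStochastic M) (hu0 : ∀ ξ ∈ stdSimplex ℝ K, 0 ≤ u ξ)
    (hC : IsLUB (u '' stdSimplex ℝ K) C) (hv : IsValueFamily M u C v)
    (hδ : δ ∈ Set.Ico (0:ℝ) 1) {ξ : K → ℝ} (hξ : ξ ∈ stdSimplex ℝ K)
    {ε : ℝ} (hε : 0 < ε) :
    ∃ α ξs, IsSplit ξ α ξs ∧ v δ ξ ≤ splitPayoff M u δ (v δ) α ξs + ε := by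
  have hne : { r : ℝ | ∃ α ξs, IsSplit ξ α ξs ∧ r = splitPayoff M u δ (v δ) α ξs }.Nonempty :=
    ⟨_, _, _, MP.trivSplit hξ, rfl⟩
  have heq := (hv δ hδ).2 ξ hξ
  have hlt : v δ ξ - ε < sSup { r : ℝ | ∃ α ξs, IsSplit ξ α ξs ∧
      r = splitPayoff M u δ (v δ) α ξs } := by
    rw [← heq]; linarith
  obtain ⟨r, ⟨α, ξs, hsp, rfl⟩, hr⟩ := exists_lt_of_lt_csSup hne hlt
  exact ⟨α, ξs, hsp, by linarith⟩

end Bellman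

section Concave
variable {K : Type*} [Fintype K] [Nonempty K] {M : Matrix K K ℝ} {u : (K → ℝ) → ℝ}
  {C : ℝ} {v : ℝ → (K → ℝ) → ℝ} {δ : ℝ}

lemma MP.concave (hM : IsStochastic M) (hu0 : ∀ ξ ∈ stdSimplex ℝ K, 0 ≤ u ξ)
    (hC : IsLUB (u '' stdSimplex ℝ K) C) (hv : IsValueFamily M u C v)
    (hδ : δ ∈ Set.Ico (0:ℝ) 1) {ξ : K → ℝ} (hξ : ξ ∈ stdSimplex ℝ K)
    {α : ℕ → ℝ} {ξs : ℕ → K → ℝ} (hsp : IsSplit ξ α ξs) :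
    (∑' s, α s * v δ (ξs s)) ≤ v δ ξ := by
  refine le_of_forall_pos_le_add (fun ε hε => ?_)
  obtain ⟨hα0, hmem, hα1, hbar⟩ := hsp
  have hαS := MP.weights_summable hα1
  choose β η hspl hpay using fun s =>
    MP.exists_split_near hM hu0 hC hv hδ (hmem s) hε
  set g : (K → ℝ) → ℝ := fun x => (1 - δ) * u x + δ * v δ (Matrix.vecMul x M) with hg
  have hgb : ∀ x ∈ stdSimplex ℝ K, 0 ≤ g x ∧ g x ≤ C := fun x hx =>
    MP.stage_bounds hM hu0 hC hv hδ hx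
  -- the composite split
  set γ : ℕ → ℝ := fun n => α (Nat.unpair n).1 * β (Nat.unpair n).1 (Nat.unpair n).2 with hγ
  set ζ : ℕ → K → ℝ := fun n => η (Nat.unpair n).1 (Nat.unpair n).2 with hζ
  have hβS : ∀ s, Summable (β s) := fun s => MP.weights_summable (hspl s).2.2.1
  have hrowsum : ∀ s, (∑' t, α s * β s t) = α s := by
    intro s; rw [tsum_mul_left, (hspl s).2.2.1, mul_one]
  have hcomp : IsSplit ξ γ ζ := by
    refine ⟨fun n => mul_nonneg (hα0 _) ((hspl _).1 _), fun n => (hspl _).2.1 _, ?_, ?_⟩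
    · have := MP.tsum_pair (f := fun s t => α s * β s t)
        (fun s t => mul_nonneg (hα0 s) ((hspl s).1 t))
        (fun s => (hβS s).mul_left (α s))
        (by simpa only [hrowsum] using hαS)
      rw [this.2]
      simp_rw [hrowsum]
      exact hα1
    · intro ℓ
      have hrow : ∀ s, Summable (fun t => α s * β s t * η s t ℓ) := by
        intro s
        refine Summable.congr (((MP.combo_summable (hspl s).1 (hβS s)
          (fun t => MP.coord_le_one ((hspl s).2.1 t) ℓ)
          (fun t => MP.coord_nonneg ((hspl s).2.1 t) ℓ))).mul_left (α s)) (fun t => by ring)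
      have hrowsum2 : ∀ s, (∑' t, α s * β s t * η s t ℓ) = α s * ξs s ℓ := by
        intro s
        simp_rw [mul_assoc]
        rw [tsum_mul_left, (hspl s).2.2.2 ℓ]
      have hcol : Summable (fun s => α s * ξs s ℓ) :=
        MP.combo_summable hα0 hαS (fun s => MP.coord_le_one (hmem s) ℓ)
          (fun s => MP.coord_nonneg (hmem s) ℓ)
      have := MP.tsum_pair (f := fun s t => α s * β s t * η s t ℓ)
        (fun s t => mul_nonneg (mul_nonneg (hα0 s) ((hspl s).1 t))
          (MP.coord_nonneg ((hspl s).2.1 t) ℓ))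
        hrow (by simpa only [hrowsum2] using hcol)
      rw [this.2]
      simp_rw [hrowsum2]
      exact hbar ℓ
  -- payoff of the composite split
  have hpaysum : ∀ s, Summable (fun t => β s t * g (η s t)) := fun s =>
    (MP.payoff_bounds hM hu0 hC hv hδ (hspl s)).1
  have hpayC : ∀ s, 0 ≤ splitPayoff M u δ (v δ) (β s) (η s) ∧
      splitPayoff M u δ (v δ) (β s) (η s) ≤ C := fun s =>
    ⟨(MP.payoff_bounds hM hu0 hC hv hδ (hspl s)).2.1,
     (MP.payoff_bounds hM hu0 hC hv hδ (hspl s)).2.2⟩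
  have hrowsum3 : ∀ s, (∑' t, α s * β s t * g (η s t)) =
      α s * splitPayoff M u δ (v δ) (β s) (η s) := by
    intro s
    simp_rw [mul_assoc]
    rw [tsum_mul_left]
    rfl
  have hcolpay : Summable (fun s => α s * splitPayoff M u δ (v δ) (β s) (η s)) :=
    MP.combo_summable hα0 hαS (fun s => (hpayC s).2) (fun s => (hpayC s).1)
  have hpairpay := MP.tsum_pair (f := fun s t => α s * β s t * g (η s t))
    (fun s t => mul_nonneg (mul_nonneg (hα0 s) ((hspl s).1 t)) (hgb _ ((hspl s).2.1 t)).1)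
    (fun s => Summable.congr ((hpaysum s).mul_left (α s)) (fun t => by ring))
    (by simpa only [hrowsum3] using hcolpay)
  have hpaycomp : splitPayoff M u δ (v δ) γ ζ =
      ∑' s, α s * splitPayoff M u δ (v δ) (β s) (η s) := by
    have : splitPayoff M u δ (v δ) γ ζ =
        ∑' n, α (Nat.unpair n).1 * β (Nat.unpair n).1 (Nat.unpair n).2 *
          g (η (Nat.unpair n).1 (Nat.unpair n).2) := rfl
    rw [this, hpairpay.2]
    simp_rw [hrowsum3]
  -- conclude
  have hvb : ∀ s, 0 ≤ v δ (ξs s) ∧ v δ (ξs s) ≤ C := fun s => (hv δ hδ).1 _ (hmem s)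
  have h1 : (∑' s, α s * v δ (ξs s)) ≤
      ∑' s, α s * (splitPayoff M u δ (v δ) (β s) (η s) + ε) := by
    refine Summable.tsum_le_tsum (fun s => mul_le_mul_of_nonneg_left (hpay s) (hα0 s))
      (MP.combo_summable hα0 hαS (fun s => (hvb s).2) (fun s => (hvb s).1))
      (MP.combo_summable hα0 hαS (fun s => add_le_add (hpayC s).2 (le_refl ε))
        (fun s => add_nonneg (hpayC s).1 hε.le))
  have h2 : (∑' s, α s * (splitPayoff M u δ (v δ) (β s) (η s) + ε)) =
      (∑' s, α s * splitPayoff M u δ (v δ) (β s) (η s)) + ε := by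
    simp_rw [mul_add]
    rw [Summable.tsum_add hcolpay (hαS.mul_right ε), tsum_mul_right, hα1, one_mul]
  have h3 : splitPayoff M u δ (v δ) γ ζ ≤ v δ ξ :=
    MP.payoff_le_v hM hu0 hC hv hδ hξ hcomp
  calc (∑' s, α s * v δ (ξs s)) ≤ _ := h1
    _ = (∑' s, α s * splitPayoff M u δ (v δ) (β s) (η s)) + ε := h2
    _ = splitPayoff M u δ (v δ) γ ζ + ε := by rw [hpaycomp]
    _ ≤ v δ ξ + ε := by linarith

end Concave

/-- The recursively constructed sequence of belief distributions. -/
def MP.plan {K : Type*} [Fintype K] (M : Matrix K K ℝ) (π : K → ℝ)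
    (σα : (K → ℝ) → ℕ → ℝ) (σξs : (K → ℝ) → ℕ → K → ℝ) :
    ℕ → (ℕ → ℝ) × (ℕ → K → ℝ)
  | 0 => (fun s => if s = 0 then 1 else 0, fun _ => π)
  | k+1 =>
    (fun n => (MP.plan M π σα σξs k).1 (Nat.unpair n).1 *
        σα ((MP.plan M π σα σξs k).2 (Nat.unpair n).1) (Nat.unpair n).2,
     fun n => Matrix.vecMul
        (σξs ((MP.plan M π σα σξs k).2 (Nat.unpair n).1) (Nat.unpair n).2) M)

example {K : Type*} [Fintype K] (M : Matrix K K ℝ) (π : K → ℝ)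
    (σα : (K → ℝ) → ℕ → ℝ) (σξs : (K → ℝ) → ℕ → K → ℝ) (k n : ℕ) :
    (MP.plan M π σα σξs (k+1)).1 n = (MP.plan M π σα σξs k).1 (Nat.unpair n).1 *
        σα ((MP.plan M π σα σξs k).2 (Nat.unpair n).1) (Nat.unpair n).2 := rfl

example {K : Type*} [Fintype K] (M : Matrix K K ℝ) (π : K → ℝ)
    (σα : (K → ℝ) → ℕ → ℝ) (σξs : (K → ℝ) → ℕ → K → ℝ) :
    (MP.plan M π σα σξs 0).1 = fun s => if s = 0 then (1:ℝ) else 0 := rfl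

theorem markovian_persuasion_value_nonincreasing_at_invariant
    {K : Type*} [Fintype K] [Nonempty K]
    (M : Matrix K K ℝ) (hM : IsStochastic M)
    (u : (K → ℝ) → ℝ) (hu0 : ∀ ξ ∈ stdSimplex ℝ K, 0 ≤ u ξ)
    (husc : UpperSemicontinuousOn u (stdSimplex ℝ K))
    (C : ℝ) (hC : IsLUB (u '' stdSimplex ℝ K) C)
    (v : ℝ → (K → ℝ) → ℝ) (hv : IsValueFamily M u C v)
    (π : K → ℝ) (hπ : π ∈ stdSimplex ℝ K) (hπinv : Matrix.vecMul π M = π) :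
    ∀ δ₁ δ₂ : ℝ, 0 ≤ δ₁ → δ₁ ≤ δ₂ → δ₂ < 1 → v δ₂ π ≤ v δ₁ π := by
  intro δ₁ δ₂ hδ₁0 h12 hδ₂1
  have hδ₂ : δ₂ ∈ Set.Ico (0:ℝ) 1 := ⟨hδ₁0.trans h12, hδ₂1⟩
  have hδ₁ : δ₁ ∈ Set.Ico (0:ℝ) 1 := ⟨hδ₁0, lt_of_le_of_lt h12 hδ₂1⟩
  have hC0 : 0 ≤ C := MP.C_nonneg hu0 hC
  have hy0 : 0 ≤ v δ₁ π := ((hv δ₁ hδ₁).1 π hπ).1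
  have hq : (0:ℝ) < 1 - δ₂ := by linarith
  have hp : (0:ℝ) < 1 - δ₁ := by linarith
  refine le_of_forall_pos_le_add (fun ε hε => ?_)
  set ε' := ε * (1 - δ₂) with hε'def
  have hε' : 0 < ε' := mul_pos hε hq
  -- ε'-optimal splits for δ₂ at every belief
  have hsel : ∀ ξ : K → ℝ, ∃ (a : ℕ → ℝ) (x : ℕ → K → ℝ),
      ξ ∈ stdSimplex ℝ K → IsSplit ξ a x ∧
        v δ₂ ξ ≤ splitPayoff M u δ₂ (v δ₂) a x + ε' := by
    intro ξ
    by_cases hξ : ξ ∈ stdSimplex ℝ K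
    · obtain ⟨a, x, h1, h2⟩ := MP.exists_split_near hM hu0 hC hv hδ₂ hξ hε'
      exact ⟨a, x, fun _ => ⟨h1, h2⟩⟩
    · exact ⟨fun _ => 0, fun _ => ξ, fun h => absurd h hξ⟩
  choose σα σξs hσ using hsel
  set w : ℕ → ℕ → ℝ := fun k => (MP.plan M π σα σξs k).1 with hw
  set b : ℕ → ℕ → K → ℝ := fun k => (MP.plan M π σα σξs k).2 with hb
  -- the plan invariant
  have hplan : ∀ k, IsSplit π (w k) (b k) := by
    intro k
    induction k with
    | zero => exact MP.trivSplit hπ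
    | succ k ih =>
      obtain ⟨hk0, hkmem, hk1, hkbar⟩ := ih
      have hkS : Summable (w k) := MP.weights_summable hk1
      have hσk : ∀ s, IsSplit (b k s) (σα (b k s)) (σξs (b k s)) :=
        fun s => (hσ _ (hkmem s)).1
      have hσS : ∀ s, Summable (σα (b k s)) :=
        fun s => MP.weights_summable (hσk s).2.2.1
      refine ⟨fun n => mul_nonneg (hk0 _) ((hσk _).1 _),
        fun n => MP.vecMul_mem hM ((hσk _).2.1 _), ?_, ?_⟩
      · have hrowsum : ∀ s, (∑' t, w k s * σα (b k s) t) = w k s := by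
          intro s; rw [tsum_mul_left, (hσk s).2.2.1, mul_one]
        have hpair := MP.tsum_pair (f := fun s t => w k s * σα (b k s) t)
          (fun s t => mul_nonneg (hk0 s) ((hσk s).1 t))
          (fun s => (hσS s).mul_left (w k s))
          (by simpa only [hrowsum] using hkS)
        calc (∑' n, w (k+1) n) = ∑' s, ∑' t, w k s * σα (b k s) t := hpair.2
          _ = ∑' s, w k s := by simp_rw [hrowsum]
          _ = 1 := hk1
      · intro ℓ
        have hmem' : ∀ s t, Matrix.vecMul (σξs (b k s) t) M ∈ stdSimplex ℝ K :=
          fun s t => MP.vecMul_mem hM ((hσk s).2.1 t)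
        have hrow : ∀ s, Summable
            (fun t => w k s * σα (b k s) t * Matrix.vecMul (σξs (b k s) t) M ℓ) := by
          intro s
          refine Summable.congr (((MP.combo_summable (hσk s).1 (hσS s)
            (fun t => MP.coord_le_one (hmem' s t) ℓ)
            (fun t => MP.coord_nonneg (hmem' s t) ℓ))).mul_left (w k s))
            (fun t => by ring)
        have hrowsum : ∀ s, (∑' t, w k s * σα (b k s) t *
            Matrix.vecMul (σξs (b k s) t) M ℓ) = w k s * Matrix.vecMul (b k s) M ℓ := by
          intro s
          simp_rw [mul_assoc]
          rw [tsum_mul_left, MP.bary_vecMul hM (hσk s) ℓ]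
        have hcol : Summable (fun s => w k s * Matrix.vecMul (b k s) M ℓ) :=
          MP.combo_summable hk0 hkS
            (fun s => MP.coord_le_one (MP.vecMul_mem hM (hkmem s)) ℓ)
            (fun s => MP.coord_nonneg (MP.vecMul_mem hM (hkmem s)) ℓ)
        have hpair := MP.tsum_pair
          (f := fun s t => w k s * σα (b k s) t * Matrix.vecMul (σξs (b k s) t) M ℓ)
          (fun s t => mul_nonneg (mul_nonneg (hk0 s) ((hσk s).1 t))
            (MP.coord_nonneg (hmem' s t) ℓ))
          hrow (by simpa only [hrowsum] using hcol)
        calc (∑' n, w (k+1) n * b (k+1) n ℓ)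
            = ∑' s, ∑' t, w k s * σα (b k s) t * Matrix.vecMul (σξs (b k s) t) M ℓ :=
              hpair.2
          _ = ∑' s, w k s * Matrix.vecMul (b k s) M ℓ := by simp_rw [hrowsum]
          _ = Matrix.vecMul π M ℓ := MP.bary_vecMul hM ⟨hk0, hkmem, hk1, hkbar⟩ ℓ
          _ = π ℓ := by rw [hπinv]
  -- expectations along the plan
  set A : ℕ → ℕ → ℝ := fun k s => ∑' t, σα (b k s) t * u (σξs (b k s) t) with hA
  set Ev : ℝ → ℕ → ℝ := fun d k => ∑' s, w k s * v d (b k s) with hEv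
  set a : ℕ → ℝ := fun k => ∑' s, w k s * A k s with ha
  have hσk : ∀ k s, IsSplit (b k s) (σα (b k s)) (σξs (b k s)) :=
    fun k s => (hσ _ ((hplan k).2.1 s)).1
  have hσS : ∀ k s, Summable (σα (b k s)) :=
    fun k s => MP.weights_summable (hσk k s).2.2.1
  have hkS : ∀ k, Summable (w k) := fun k => MP.weights_summable (hplan k).2.2.1
  have hAb : ∀ k s, 0 ≤ A k s ∧ A k s ≤ C := by
    intro k s
    constructor
    · exact tsum_nonneg fun t => mul_nonneg ((hσk k s).1 t)
        (hu0 _ ((hσk k s).2.1 t))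
    · exact MP.combo_le (hσk k s).1 (hσk k s).2.2.1
        (fun t => (MP.u_bounds hu0 hC ((hσk k s).2.1 t)).2)
        (fun t => hu0 _ ((hσk k s).2.1 t))
  have hab : ∀ k, 0 ≤ a k ∧ a k ≤ C := by
    intro k
    exact ⟨tsum_nonneg fun s => mul_nonneg ((hplan k).1 s) (hAb k s).1,
      MP.combo_le (hplan k).1 (hplan k).2.2.1 (fun s => (hAb k s).2)
        (fun s => (hAb k s).1)⟩
  have hvb : ∀ d ∈ Set.Ico (0:ℝ) 1, ∀ k s, 0 ≤ v d (b k s) ∧ v d (b k s) ≤ C :=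
    fun d hd k s => (hv d hd).1 _ ((hplan k).2.1 s)
  have hEvb : ∀ d ∈ Set.Ico (0:ℝ) 1, ∀ k, 0 ≤ Ev d k ∧ Ev d k ≤ C := by
    intro d hd k
    exact ⟨tsum_nonneg fun s => mul_nonneg ((hplan k).1 s) (hvb d hd k s).1,
      MP.combo_le (hplan k).1 (hplan k).2.2.1 (fun s => (hvb d hd k s).2)
        (fun s => (hvb d hd k s).1)⟩
  have hEvS : ∀ d ∈ Set.Ico (0:ℝ) 1, ∀ k, Summable (fun s => w k s * v d (b k s)) :=
    fun d hd k => MP.combo_summable (hplan k).1 (hkS k)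
      (fun s => (hvb d hd k s).2) (fun s => (hvb d hd k s).1)
  have hEv0 : ∀ d : ℝ, Ev d 0 = v d π := by
    intro d
    have h : ∀ s : ℕ, w 0 s * v d (b 0 s) = if s = 0 then v d π else 0 := by
      intro s
      show (if s = 0 then (1:ℝ) else 0) * v d π = if s = 0 then v d π else 0
      split <;> simp
    calc Ev d 0 = ∑' s, (if s = 0 then v d π else 0) := by
          rw [hEv]; exact tsum_congr h
      _ = v d π := tsum_ite_eq 0 _
  -- the key expansion of one-step payoffs along the plan
  have hexp : ∀ d ∈ Set.Ico (0:ℝ) 1, ∀ k,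
      (∑' s, w k s * splitPayoff M u d (v d) (σα (b k s)) (σξs (b k s)))
        = (1 - d) * a k + d * Ev d (k+1) := by
    intro d hd k
    set B : ℕ → ℝ := fun s =>
      ∑' t, σα (b k s) t * v d (Matrix.vecMul (σξs (b k s) t) M) with hB
    have hmem' : ∀ s t, Matrix.vecMul (σξs (b k s) t) M ∈ stdSimplex ℝ K :=
      fun s t => MP.vecMul_mem hM ((hσk k s).2.1 t)
    have hvb' : ∀ s t, 0 ≤ v d (Matrix.vecMul (σξs (b k s) t) M) ∧
        v d (Matrix.vecMul (σξs (b k s) t) M) ≤ C :=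
      fun s t => (hv d hd).1 _ (hmem' s t)
    have hsumu : ∀ s, Summable (fun t => σα (b k s) t * u (σξs (b k s) t)) :=
      fun s => MP.combo_summable (hσk k s).1 (hσS k s)
        (fun t => (MP.u_bounds hu0 hC ((hσk k s).2.1 t)).2)
        (fun t => hu0 _ ((hσk k s).2.1 t))
    have hsumv : ∀ s, Summable
        (fun t => σα (b k s) t * v d (Matrix.vecMul (σξs (b k s) t) M)) :=
      fun s => MP.combo_summable (hσk k s).1 (hσS k s)
        (fun t => (hvb' s t).2) (fun t => (hvb' s t).1)
    have hBb : ∀ s, 0 ≤ B s ∧ B s ≤ C := by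
      intro s
      exact ⟨tsum_nonneg fun t => mul_nonneg ((hσk k s).1 t) (hvb' s t).1,
        MP.combo_le (hσk k s).1 (hσk k s).2.2.1 (fun t => (hvb' s t).2)
          (fun t => (hvb' s t).1)⟩
    have hper : ∀ s, splitPayoff M u d (v d) (σα (b k s)) (σξs (b k s))
        = (1 - d) * A k s + d * B s := by
      intro s
      exact MP.tsum_combo_add (1 - d) d (hsumu s) (hsumv s)
    have hsumWA : Summable (fun s => w k s * A k s) :=
      MP.combo_summable (hplan k).1 (hkS k) (fun s => (hAb k s).2)
        (fun s => (hAb k s).1)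
    have hsumWB : Summable (fun s => w k s * B s) :=
      MP.combo_summable (hplan k).1 (hkS k) (fun s => (hBb s).2)
        (fun s => (hBb s).1)
    have hEvnext : Ev d (k+1) = ∑' s, w k s * B s := by
      have hrow : ∀ s, Summable (fun t => w k s * σα (b k s) t *
          v d (Matrix.vecMul (σξs (b k s) t) M)) :=
        fun s => Summable.congr ((hsumv s).mul_left (w k s)) (fun t => by ring)
      have hrowsum : ∀ s, (∑' t, w k s * σα (b k s) t *
          v d (Matrix.vecMul (σξs (b k s) t) M)) = w k s * B s := by
        intro s
        simp_rw [mul_assoc]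
        rw [tsum_mul_left]
      have hpair := MP.tsum_pair
        (f := fun s t => w k s * σα (b k s) t *
          v d (Matrix.vecMul (σξs (b k s) t) M))
        (fun s t => mul_nonneg (mul_nonneg ((hplan k).1 s) ((hσk k s).1 t))
          (hvb' s t).1)
        hrow (by simpa only [hrowsum] using hsumWB)
      calc Ev d (k+1)
          = ∑' s, ∑' t, w k s * σα (b k s) t *
              v d (Matrix.vecMul (σξs (b k s) t) M) := hpair.2
        _ = ∑' s, w k s * B s := by simp_rw [hrowsum]
    calc (∑' s, w k s * splitPayoff M u d (v d) (σα (b k s)) (σξs (b k s)))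
        = ∑' s, w k s * ((1 - d) * A k s + d * B s) := by simp_rw [hper]
      _ = (1 - d) * (∑' s, w k s * A k s) + d * (∑' s, w k s * B s) :=
          MP.tsum_combo_add (1 - d) d hsumWA hsumWB
      _ = (1 - d) * a k + d * Ev d (k+1) := by rw [hEvnext]
  -- one-step inequalities
  have hpayb : ∀ d ∈ Set.Ico (0:ℝ) 1, ∀ k s,
      0 ≤ splitPayoff M u d (v d) (σα (b k s)) (σξs (b k s)) ∧
        splitPayoff M u d (v d) (σα (b k s)) (σξs (b k s)) ≤ C :=
    fun d hd k s => ⟨(MP.payoff_bounds hM hu0 hC hv hd (hσk k s)).2.1,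
      (MP.payoff_bounds hM hu0 hC hv hd (hσk k s)).2.2⟩
  have hstep₂ : ∀ k, Ev δ₂ k ≤ (1 - δ₂) * a k + δ₂ * Ev δ₂ (k+1) + ε' := by
    intro k
    have h1 : Ev δ₂ k ≤ ∑' s, w k s *
        (splitPayoff M u δ₂ (v δ₂) (σα (b k s)) (σξs (b k s)) + ε') := by
      refine Summable.tsum_le_tsum (fun s => mul_le_mul_of_nonneg_left
        ((hσ _ ((hplan k).2.1 s)).2) ((hplan k).1 s))
        (hEvS δ₂ hδ₂ k)
        (MP.combo_summable (hplan k).1 (hkS k)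
          (fun s => add_le_add (hpayb δ₂ hδ₂ k s).2 (le_refl ε'))
          (fun s => add_nonneg (hpayb δ₂ hδ₂ k s).1 hε'.le))
    have h2 : (∑' s, w k s *
        (splitPayoff M u δ₂ (v δ₂) (σα (b k s)) (σξs (b k s)) + ε'))
        = (∑' s, w k s * splitPayoff M u δ₂ (v δ₂) (σα (b k s)) (σξs (b k s))) + ε' := by
      simp_rw [mul_add]
      rw [Summable.tsum_add (MP.combo_summable (hplan k).1 (hkS k)
          (fun s => (hpayb δ₂ hδ₂ k s).2) (fun s => (hpayb δ₂ hδ₂ k s).1))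
          ((hkS k).mul_right ε'), tsum_mul_right, (hplan k).2.2.1, one_mul]
    calc Ev δ₂ k ≤ _ := h1
      _ = _ + ε' := h2
      _ = (1 - δ₂) * a k + δ₂ * Ev δ₂ (k+1) + ε' := by rw [hexp δ₂ hδ₂ k]
  have hstep₁ : ∀ k, (1 - δ₁) * a k + δ₁ * Ev δ₁ (k+1) ≤ Ev δ₁ k := by
    intro k
    rw [← hexp δ₁ hδ₁ k]
    refine Summable.tsum_le_tsum (fun s => mul_le_mul_of_nonneg_left
      (MP.payoff_le_v hM hu0 hC hv hδ₁ ((hplan k).2.1 s) (hσk k s)) ((hplan k).1 s))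
      (MP.combo_summable (hplan k).1 (hkS k)
        (fun s => (hpayb δ₁ hδ₁ k s).2) (fun s => (hpayb δ₁ hδ₁ k s).1))
      (hEvS δ₁ hδ₁ k)
  have hEv₁y : ∀ k, Ev δ₁ k ≤ v δ₁ π :=
    fun k => MP.concave hM hu0 hC hv hδ₁ hπ (hplan k)
  -- upward telescoping for δ₂
  have htel₂ : ∀ n, v δ₂ π ≤ (1 - δ₂) * (∑ k ∈ Finset.range n, δ₂^k * a k)
      + δ₂^n * Ev δ₂ n + ε' * (∑ k ∈ Finset.range n, δ₂^k) := by
    intro n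
    induction n with
    | zero => simp [hEv0 δ₂]
    | succ n ih =>
      have hpow : (0:ℝ) ≤ δ₂^n := pow_nonneg hδ₂.1 n
      have h2 : δ₂^n * Ev δ₂ n ≤ δ₂^n * ((1 - δ₂) * a n + δ₂ * Ev δ₂ (n+1) + ε') :=
        mul_le_mul_of_nonneg_left (hstep₂ n) hpow
      calc v δ₂ π ≤ (1 - δ₂) * (∑ k ∈ Finset.range n, δ₂^k * a k)
            + δ₂^n * Ev δ₂ n + ε' * (∑ k ∈ Finset.range n, δ₂^k) := ih
        _ ≤ (1 - δ₂) * (∑ k ∈ Finset.range n, δ₂^k * a k)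
            + δ₂^n * ((1 - δ₂) * a n + δ₂ * Ev δ₂ (n+1) + ε')
            + ε' * (∑ k ∈ Finset.range n, δ₂^k) := by linarith
        _ = (1 - δ₂) * (∑ k ∈ Finset.range (n+1), δ₂^k * a k)
            + δ₂^(n+1) * Ev δ₂ (n+1) + ε' * (∑ k ∈ Finset.range (n+1), δ₂^k) := by
            rw [Finset.sum_range_succ, Finset.sum_range_succ (fun k => δ₂^k), pow_succ]
            ring
  have hgeom : ∀ n, ε' * (∑ k ∈ Finset.range n, δ₂^k) ≤ ε := by
    intro n
    have hg : (∑ k ∈ Finset.range n, δ₂^k) * (δ₂ - 1) = δ₂^n - 1 := geom_sum_mul δ₂ n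
    have h1 : (∑ k ∈ Finset.range n, δ₂^k) * (1 - δ₂) ≤ 1 := by
      nlinarith [pow_nonneg hδ₂.1 n]
    have h2 : ε * ((∑ k ∈ Finset.range n, δ₂^k) * (1 - δ₂)) ≤ ε * 1 :=
      mul_le_mul_of_nonneg_left h1 hε.le
    calc ε' * (∑ k ∈ Finset.range n, δ₂^k)
        = ε * ((∑ k ∈ Finset.range n, δ₂^k) * (1 - δ₂)) := by rw [hε'def]; ring
      _ ≤ ε * 1 := h2
      _ = ε := mul_one ε
  have hup0 : ∀ n, v δ₂ π ≤ (1 - δ₂) * (∑ k ∈ Finset.range n, δ₂^k * a k)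
      + δ₂^n * C + ε := by
    intro n
    have h1 : δ₂^n * Ev δ₂ n ≤ δ₂^n * C :=
      mul_le_mul_of_nonneg_left (hEvb δ₂ hδ₂ n).2 (pow_nonneg hδ₂.1 n)
    linarith [htel₂ n, hgeom n]
  -- pass to the limit
  have SA2 : Summable (fun k => δ₂^k * a k) := by
    refine Summable.of_nonneg_of_le
      (fun k => mul_nonneg (pow_nonneg hδ₂.1 k) (hab k).1)
      (fun k => mul_le_mul_of_nonneg_left (hab k).2 (pow_nonneg hδ₂.1 k))
      ((summable_geometric_of_lt_one hδ₂.1 hδ₂.2).mul_right C)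
  set T2 := ∑' k, δ₂^k * a k with hT2
  have hup : v δ₂ π ≤ (1 - δ₂) * T2 + 0 * C + ε := by
    have hS : Filter.Tendsto (fun n => ∑ k ∈ Finset.range n, δ₂^k * a k)
        Filter.atTop (nhds T2) := SA2.hasSum.tendsto_sum_nat
    have t1 := hS.const_mul (1 - δ₂)
    have t2 := (tendsto_pow_atTop_nhds_zero_of_lt_one hδ₂.1 hδ₂.2).mul_const C
    exact ge_of_tendsto' ((t1.add t2).add tendsto_const_nhds) hup0
  rw [zero_mul, add_zero] at hup
  -- downward telescoping for δ₁
  have htel₁ : ∀ n k, (1 - δ₁) * (∑ j ∈ Finset.range n, δ₁^j * a (k+j))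
      + δ₁^n * Ev δ₁ (k+n) ≤ Ev δ₁ k := by
    intro n
    induction n with
    | zero => intro k; simp
    | succ n ih =>
      intro k
      have hsum : (∑ j ∈ Finset.range (n+1), δ₁^j * a (k+j))
          = a k + δ₁ * (∑ j ∈ Finset.range n, δ₁^j * a ((k+1)+j)) := by
        rw [Finset.sum_range_succ']
        simp only [pow_zero, Nat.add_zero, one_mul]
        rw [Finset.mul_sum]
        rw [add_comm]
        congr 1
        refine Finset.sum_congr rfl (fun j _ => ?_)
        rw [show k + (j+1) = (k+1)+j from by omega, pow_succ]
        ring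
      have h3 : δ₁ * ((1 - δ₁) * (∑ j ∈ Finset.range n, δ₁^j * a ((k+1)+j))
          + δ₁^n * Ev δ₁ ((k+1)+n)) ≤ δ₁ * Ev δ₁ (k+1) :=
        mul_le_mul_of_nonneg_left (ih (k+1)) hδ₁0
      rw [show (k+1)+n = k+(n+1) from by omega] at h3
      have h2 := hstep₁ k
      rw [hsum, pow_succ]
      nlinarith [h3, h2]
  have hT_partial : ∀ k n, (1 - δ₁) * (∑ j ∈ Finset.range n, δ₁^j * a (k+j)) ≤ v δ₁ π := by
    intro k n
    have h0 : 0 ≤ δ₁^n * Ev δ₁ (k+n) :=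
      mul_nonneg (pow_nonneg hδ₁0 n) (hEvb δ₁ hδ₁ (k+n)).1
    linarith [htel₁ n k, hEv₁y k]
  have SA1 : ∀ k, Summable (fun j => δ₁^j * a (k+j)) := by
    intro k
    refine Summable.of_nonneg_of_le
      (fun j => mul_nonneg (pow_nonneg hδ₁0 j) (hab (k+j)).1)
      (fun j => mul_le_mul_of_nonneg_left (hab (k+j)).2 (pow_nonneg hδ₁0 j))
      ((summable_geometric_of_lt_one hδ₁0 hδ₁.2).mul_right C)
  set T : ℕ → ℝ := fun k => ∑' j, δ₁^j * a (k+j) with hT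
  have hT_le : ∀ k, (1 - δ₁) * T k ≤ v δ₁ π := by
    intro k
    have hS : Filter.Tendsto (fun n => ∑ j ∈ Finset.range n, δ₁^j * a (k+j))
        Filter.atTop (nhds (T k)) := (SA1 k).hasSum.tendsto_sum_nat
    exact le_of_tendsto' (hS.const_mul (1 - δ₁)) (hT_partial k)
  have hT0 : ∀ k, 0 ≤ T k :=
    fun k => tsum_nonneg (fun j => mul_nonneg (pow_nonneg hδ₁0 j) (hab (k+j)).1)
  have hTC : ∀ k, T k ≤ (1 - δ₁)⁻¹ * C := by
    intro k
    calc T k ≤ ∑' j, δ₁^j * C :=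
          Summable.tsum_le_tsum (fun j => mul_le_mul_of_nonneg_left (hab (k+j)).2
            (pow_nonneg hδ₁0 j)) (SA1 k)
            ((summable_geometric_of_lt_one hδ₁0 hδ₁.2).mul_right C)
      _ = (1 - δ₁)⁻¹ * C := by
          rw [tsum_mul_right, tsum_geometric_of_lt_one hδ₁0 hδ₁.2]
  have hTrec : ∀ k, T k = a k + δ₁ * T (k+1) := by
    intro k
    have he : ∀ j, δ₁^(j+1) * a (k+(j+1)) = δ₁ * (δ₁^j * a ((k+1)+j)) := by
      intro j
      rw [show k + (j+1) = (k+1)+j from by omega, pow_succ]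
      ring
    calc T k = δ₁^0 * a (k+0) + ∑' j, δ₁^(j+1) * a (k+(j+1)) :=
          Summable.tsum_eq_zero_add (SA1 k)
      _ = a k + δ₁ * T (k+1) := by
          simp_rw [he]
          rw [tsum_mul_left, pow_zero, one_mul, Nat.add_zero]
  -- Abel-type rearrangement
  have ST : Summable (fun m => δ₂^m * T m) := by
    refine Summable.of_nonneg_of_le
      (fun m => mul_nonneg (pow_nonneg hδ₂.1 m) (hT0 m))
      (fun m => mul_le_mul_of_nonneg_left (hTC m) (pow_nonneg hδ₂.1 m))
      ((summable_geometric_of_lt_one hδ₂.1 hδ₂.2).mul_right _)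
  have ST' : Summable (fun m => δ₂^m * T (m+1)) := by
    refine Summable.of_nonneg_of_le
      (fun m => mul_nonneg (pow_nonneg hδ₂.1 m) (hT0 (m+1)))
      (fun m => mul_le_mul_of_nonneg_left (hTC (m+1)) (pow_nonneg hδ₂.1 m))
      ((summable_geometric_of_lt_one hδ₂.1 hδ₂.2).mul_right _)
  set Bq := ∑' m, δ₂^m * T (m+1) with hBq
  have hA2 : (∑' m, δ₂^m * T m) = T 0 + δ₂ * Bq := by
    have he : ∀ m, δ₂^(m+1) * T (m+1) = δ₂ * (δ₂^m * T (m+1)) := by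
      intro m; rw [pow_succ]; ring
    calc (∑' m, δ₂^m * T m) = δ₂^0 * T 0 + ∑' m, δ₂^(m+1) * T (m+1) :=
          Summable.tsum_eq_zero_add ST
      _ = T 0 + δ₂ * Bq := by
          simp_rw [he]
          rw [tsum_mul_left, pow_zero, one_mul]
  have hT2A : T2 = T 0 + (δ₂ - δ₁) * Bq := by
    have ham : ∀ m, δ₂^m * a m = δ₂^m * T m - δ₁ * (δ₂^m * T (m+1)) := by
      intro m
      have := hTrec m
      have h : a m = T m - δ₁ * T (m+1) := by linarith
      rw [h]; ring
    calc T2 = ∑' m, (δ₂^m * T m - δ₁ * (δ₂^m * T (m+1))) := by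
          rw [hT2]; exact tsum_congr ham
      _ = (∑' m, δ₂^m * T m) - δ₁ * Bq := by
          rw [Summable.tsum_sub ST (ST'.mul_left δ₁), tsum_mul_left]
      _ = T 0 + (δ₂ - δ₁) * Bq := by rw [hA2]; ring
  have hBq0 : 0 ≤ Bq :=
    tsum_nonneg (fun m => mul_nonneg (pow_nonneg hδ₂.1 m) (hT0 (m+1)))
  have hBqle : (1 - δ₁) * Bq ≤ (1 - δ₂)⁻¹ * v δ₁ π := by
    have he : ∀ m, (1 - δ₁) * (δ₂^m * T (m+1)) = δ₂^m * ((1 - δ₁) * T (m+1)) := by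
      intro m; ring
    calc (1 - δ₁) * Bq = ∑' m, δ₂^m * ((1 - δ₁) * T (m+1)) := by
          rw [hBq, ← tsum_mul_left]
          exact tsum_congr he
      _ ≤ ∑' m, δ₂^m * v δ₁ π := by
          refine Summable.tsum_le_tsum (fun m => mul_le_mul_of_nonneg_left (hT_le (m+1))
            (pow_nonneg hδ₂.1 m)) ?_ ?_
          · exact Summable.congr (ST'.mul_left (1 - δ₁)) (fun m => (he m))
          · exact (summable_geometric_of_lt_one hδ₂.1 hδ₂.2).mul_right _
      _ = (1 - δ₂)⁻¹ * v δ₁ π := by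
          rw [tsum_mul_right, tsum_geometric_of_lt_one hδ₂.1 hδ₂.2]
  -- conclude
  have m1 : (1 - δ₂) * ((1 - δ₁) * T 0) ≤ (1 - δ₂) * v δ₁ π :=
    mul_le_mul_of_nonneg_left (hT_le 0) hq.le
  have m2 : (1 - δ₂) * ((1 - δ₁) * Bq) ≤ v δ₁ π := by
    calc (1 - δ₂) * ((1 - δ₁) * Bq) ≤ (1 - δ₂) * ((1 - δ₂)⁻¹ * v δ₁ π) :=
          mul_le_mul_of_nonneg_left hBqle hq.le
      _ = v δ₁ π := by
          rw [← mul_assoc, mul_inv_cancel₀ (ne_of_gt hq), one_mul]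
  have m3 : (δ₂ - δ₁) * ((1 - δ₂) * ((1 - δ₁) * Bq)) ≤ (δ₂ - δ₁) * v δ₁ π :=
    mul_le_mul_of_nonneg_left m2 (by linarith)
  have hfinal : (1 - δ₂) * T2 ≤ v δ₁ π := by
    have hmul : (1 - δ₁) * ((1 - δ₂) * T2) ≤ (1 - δ₁) * v δ₁ π := by
      rw [hT2A]
      nlinarith [m1, m3]
    exact le_of_mul_le_mul_left hmul hp
  linarith [hup, hfinal]
end
end

section
/- Assume M is irreducible with unique invariant distribution π_M, and let ξ₁, …, ξ_k ∈ Δ(K) be affinely independent beliefs such that ξM ∈ conv{ξ₁, …, ξ_k} for every ξ ∈ Δ(K). Let γ₁, …, γ_k be the unique convex weights (γ_i ≥ 0, Σ_i γ_i = 1) with π_M = Σ_i γ_i ξ_i. Then the trajectory δ ↦ Σ_{i=1}^{k} γ_i · v_δ(ξ_i) is non-decreasing on [0,1). -/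
open scoped BigOperators

noncomputable section

namespace MPAux

open scoped BigOperators

variable {K : Type*} [Fintype K] [Nonempty K] [DecidableEq K]

/-- Expectation of `f` under the discrete measure `(a, p)`. -/
def E (a : ℕ → ℝ) (p : ℕ → K → ℝ) (f : (K → ℝ) → ℝ) : ℝ := ∑' s, a s * f (p s)

/-- A discrete probability measure on the simplex. -/
def GoodM (a : ℕ → ℝ) (p : ℕ → K → ℝ) : Prop :=
  (∀ s, 0 ≤ a s) ∧ (∑' s, a s) = 1 ∧ ∀ s, p s ∈ stdSimplex ℝ K

theorem GoodM.summable {a : ℕ → ℝ} {p : ℕ → K → ℝ} (h : GoodM a p) : Summable a := by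
  by_contra hs
  have := tsum_eq_zero_of_not_summable (f := a) hs
  rw [h.2.1] at this; norm_num at this

theorem summable_mul_bound {a : ℕ → ℝ} (ha : ∀ s, 0 ≤ a s) (hs : Summable a)
    {g : ℕ → ℝ} {B : ℝ} (hg0 : ∀ s, 0 ≤ g s) (hgB : ∀ s, g s ≤ B) :
    Summable (fun s => a s * g s) := by
  refine Summable.of_nonneg_of_le (fun s => mul_nonneg (ha s) (hg0 s))
    (fun s => mul_le_mul_of_nonneg_left (hgB s) (ha s)) (hs.mul_right B)

theorem vecMul_mem_simplex {M : Matrix K K ℝ} (hM : IsStochastic M)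
    {ξ : K → ℝ} (hξ : ξ ∈ stdSimplex ℝ K) : Matrix.vecMul ξ M ∈ stdSimplex ℝ K := by
  constructor
  · intro j
    exact Finset.sum_nonneg fun i _ => mul_nonneg (hξ.1 i) (hM.1 i j)
  · rw [show (fun j => Matrix.vecMul ξ M j) = Matrix.vecMul ξ M from rfl]
    have : ∑ j, Matrix.vecMul ξ M j = ∑ i, ξ i * ∑ j, M i j := by
      simp only [Matrix.vecMul, dotProduct, Finset.mul_sum]
      rw [Finset.sum_comm]
    rw [this]
    simp only [hM.2, mul_one]
    exact hξ.2

theorem trivialSplit {ξ : K → ℝ} (hξ : ξ ∈ stdSimplex ℝ K) :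
    IsSplit ξ (fun s => if s = 0 then (1:ℝ) else 0) (fun _ => ξ) := by
  refine ⟨fun s => by positivity, fun _ => hξ, ?_, fun ℓ => ?_⟩
  · rw [tsum_eq_single 0 (fun b hb => by simp [hb])]; simp
  · rw [show (fun s => (if s = 0 then (1:ℝ) else 0) * ξ ℓ) = fun s => if s = 0 then ξ ℓ else 0
      from funext fun s => by split <;> simp_all]
    rw [tsum_eq_single 0 (fun b hb => by simp [hb])]; simp

end MPAux

namespace MPAux2
open scoped BigOperators
open MPAux
set_option linter.unusedSectionVars false

variable {K : Type*} [Fintype K] [Nonempty K] [DecidableEq K]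
variable {M : Matrix K K ℝ} (hM : IsStochastic M)
variable {u : (K → ℝ) → ℝ} (hu0 : ∀ ξ ∈ stdSimplex ℝ K, 0 ≤ u ξ)
variable {C : ℝ} (hC : IsLUB (u '' stdSimplex ℝ K) C)
variable {v : ℝ → (K → ℝ) → ℝ} (hv : IsValueFamily M u C v)
variable {δ : ℝ} (hδ : δ ∈ Set.Ico (0:ℝ) 1)

theorem simplex_nonempty : (stdSimplex ℝ K).Nonempty := by
  refine ⟨fun _ => (Fintype.card K : ℝ)⁻¹, fun _ => by positivity, ?_⟩
  rw [Finset.sum_const, nsmul_eq_mul]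
  rw [Finset.card_univ, mul_inv_cancel₀]
  exact_mod_cast Fintype.card_ne_zero

include hC in
theorem u_le_C : ∀ ξ ∈ stdSimplex ℝ K, u ξ ≤ C := fun ξ hξ => hC.1 ⟨ξ, hξ, rfl⟩

include hC hu0 in
theorem C_nonneg : 0 ≤ C := by
  obtain ⟨ξ, hξ⟩ := simplex_nonempty (K := K)
  exact le_trans (hu0 ξ hξ) (u_le_C hC ξ hξ)

include hM hu0 hC hv hδ in
theorem term_bounds {α : ℕ → ℝ} {ζ : ℕ → K → ℝ} (h0 : ∀ s, 0 ≤ α s)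
    (hζ : ∀ s, ζ s ∈ stdSimplex ℝ K) (s : ℕ) :
    0 ≤ α s * ((1 - δ) * u (ζ s) + δ * v δ (Matrix.vecMul (ζ s) M)) ∧
    α s * ((1 - δ) * u (ζ s) + δ * v δ (Matrix.vecMul (ζ s) M)) ≤ α s * C := by
  have hvb := (hv δ hδ).1 _ (vecMul_mem_simplex hM (hζ s))
  have hub := hu0 _ (hζ s)
  have huc := u_le_C hC _ (hζ s)
  have h1 : (0:ℝ) ≤ 1 - δ := by linarith [hδ.2]
  have h2 : (0:ℝ) ≤ δ := hδ.1
  constructor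
  · exact mul_nonneg (h0 s) (by nlinarith)
  · exact mul_le_mul_of_nonneg_left (by nlinarith) (h0 s)

include hM hu0 hC hv hδ in
theorem splitPayoff_summable {α : ℕ → ℝ} {ζ : ℕ → K → ℝ} (h0 : ∀ s, 0 ≤ α s)
    (hζ : ∀ s, ζ s ∈ stdSimplex ℝ K) (hsum : Summable α) :
    Summable (fun s => α s * ((1 - δ) * u (ζ s) + δ * v δ (Matrix.vecMul (ζ s) M))) :=
  Summable.of_nonneg_of_le (fun s => (term_bounds hM hu0 hC hv hδ h0 hζ s).1)
    (fun s => (term_bounds hM hu0 hC hv hδ h0 hζ s).2) (hsum.mul_right C)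

theorem split_summable {ξ : K → ℝ} {α : ℕ → ℝ} {ζ : ℕ → K → ℝ} (h : IsSplit ξ α ζ) :
    Summable α := by
  by_contra hs
  have := tsum_eq_zero_of_not_summable (f := α) hs
  rw [h.2.2.1] at this; norm_num at this

include hM hu0 hC hv hδ in
theorem splitPayoff_bounds {ξ : K → ℝ} {α : ℕ → ℝ} {ζ : ℕ → K → ℝ} (h : IsSplit ξ α ζ) :
    0 ≤ splitPayoff M u δ (v δ) α ζ ∧ splitPayoff M u δ (v δ) α ζ ≤ C := by
  have hsum := split_summable h
  constructor
  · exact tsum_nonneg (fun s => (term_bounds hM hu0 hC hv hδ h.1 h.2.1 s).1)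
  · calc splitPayoff M u δ (v δ) α ζ ≤ ∑' s, α s * C := by
          exact Summable.tsum_le_tsum (fun s => (term_bounds hM hu0 hC hv hδ h.1 h.2.1 s).2)
            (splitPayoff_summable hM hu0 hC hv hδ h.1 h.2.1 hsum) (hsum.mul_right C)
      _ = C := by rw [tsum_mul_right, h.2.2.1, one_mul]

include hM hu0 hC hv hδ in
theorem bellman_set_bddAbove {ξ : K → ℝ} :
    BddAbove { r : ℝ | ∃ α ζ, IsSplit ξ α ζ ∧ r = splitPayoff M u δ (v δ) α ζ } := by
  refine ⟨C, fun r hr => ?_⟩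
  obtain ⟨α, ζ, hs, rfl⟩ := hr
  exact (splitPayoff_bounds hM hu0 hC hv hδ hs).2

include hM hu0 hC hv hδ in
theorem v_ge_payoff {ξ : K → ℝ} (hξ : ξ ∈ stdSimplex ℝ K) {α : ℕ → ℝ} {ζ : ℕ → K → ℝ}
    (h : IsSplit ξ α ζ) : splitPayoff M u δ (v δ) α ζ ≤ v δ ξ := by
  rw [(hv δ hδ).2 ξ hξ]
  exact le_csSup (bellman_set_bddAbove hM hu0 hC hv hδ) ⟨α, ζ, h, rfl⟩

include hM hu0 hC hv hδ in
theorem v_exists_split {ξ : K → ℝ} (hξ : ξ ∈ stdSimplex ℝ K) {ε : ℝ} (hε : 0 < ε) :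
    ∃ α ζ, IsSplit ξ α ζ ∧ v δ ξ ≤ splitPayoff M u δ (v δ) α ζ + ε := by
  have hne : { r : ℝ | ∃ α ζ, IsSplit ξ α ζ ∧ r = splitPayoff M u δ (v δ) α ζ }.Nonempty :=
    ⟨_, _, _, trivialSplit hξ, rfl⟩
  have hlt : v δ ξ - ε < sSup { r : ℝ | ∃ α ζ, IsSplit ξ α ζ ∧ r = splitPayoff M u δ (v δ) α ζ } := by
    rw [← (hv δ hδ).2 ξ hξ]; linarith
  obtain ⟨r, ⟨α, ζ, hs, rfl⟩, hr⟩ := exists_lt_of_lt_csSup hne hlt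
  exact ⟨α, ζ, hs, by linarith⟩

end MPAux2

namespace MPAux3
open scoped BigOperators
open MPAux MPAux2
set_option linter.unusedSectionVars false

/-- A fixed pairing equivalence. -/
def e2 : ℕ ≃ ℕ × ℕ := (Denumerable.eqv (ℕ × ℕ)).symm

variable {K : Type*} [Fintype K] [Nonempty K] [DecidableEq K]

/-- Weights of the composition of the measure `(a,p)` with the family of splits `(SA ξ, SZ ξ)`. -/
def compA (SA : (K → ℝ) → ℕ → ℝ) (a : ℕ → ℝ) (p : ℕ → K → ℝ) : ℕ → ℝ :=
  fun n => a (e2 n).1 * SA (p (e2 n).1) (e2 n).2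

/-- Points of the composition. -/
def compZ (SZ : (K → ℝ) → ℕ → (K → ℝ)) (p : ℕ → K → ℝ) : ℕ → (K → ℝ) :=
  fun n => SZ (p (e2 n).1) (e2 n).2

theorem coord_bounds {ξ : K → ℝ} (hξ : ξ ∈ stdSimplex ℝ K) (ℓ : K) :
    0 ≤ ξ ℓ ∧ ξ ℓ ≤ 1 := by
  refine ⟨hξ.1 ℓ, ?_⟩
  rw [← hξ.2]
  exact Finset.single_le_sum (fun i _ => hξ.1 i) (Finset.mem_univ ℓ)

variable {SA : (K → ℝ) → ℕ → ℝ} {SZ : (K → ℝ) → ℕ → (K → ℝ)}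
variable {a : ℕ → ℝ} {p : ℕ → K → ℝ}
variable (HS : ∀ ξ ∈ stdSimplex ℝ K, IsSplit ξ (SA ξ) (SZ ξ))
variable (hG : GoodM a p)

include HS hG in
theorem tsum_comp {f : (K → ℝ) → ℝ} {B : ℝ}
    (hf : ∀ ξ ∈ stdSimplex ℝ K, 0 ≤ f ξ ∧ f ξ ≤ B) :
    (∑' n, compA SA a p n * f (compZ SZ p n))
      = ∑' s, a s * ∑' t, SA (p s) t * f (SZ (p s) t) := by
  have hB : 0 ≤ B := le_trans (hf _ (hG.2.2 0)).1 (hf _ (hG.2.2 0)).2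
  set g : ℕ × ℕ → ℝ := fun q => a q.1 * (SA (p q.1) q.2 * f (SZ (p q.1) q.2)) with hg
  have hSs : ∀ s, IsSplit (p s) (SA (p s)) (SZ (p s)) := fun s => HS _ (hG.2.2 s)
  have hg0 : ∀ q, 0 ≤ g q := fun q =>
    mul_nonneg (hG.1 _) (mul_nonneg ((hSs q.1).1 q.2) (hf _ ((hSs q.1).2.1 q.2)).1)
  have hgle : ∀ q, g q ≤ a q.1 * (SA (p q.1) q.2 * B) := fun q =>
    mul_le_mul_of_nonneg_left
      (mul_le_mul_of_nonneg_left (hf _ ((hSs q.1).2.1 q.2)).2 ((hSs q.1).1 q.2)) (hG.1 _)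
  have hmaj : Summable (fun q : ℕ × ℕ => a q.1 * (SA (p q.1) q.2 * B)) := by
    rw [summable_prod_of_nonneg (fun q => mul_nonneg (hG.1 _)
      (mul_nonneg ((hSs q.1).1 q.2) hB))]
    constructor
    · intro s
      exact (((split_summable (hSs s)).mul_right B).mul_left (a s))
    · have : ∀ s:ℕ, (∑' t, a s * (SA (p s) t * B)) = a s * B := by
        intro s
        rw [tsum_mul_left, tsum_mul_right, (hSs s).2.2.1, one_mul]
      simpa only [this] using hG.summable.mul_right B
  have hgs : Summable g := Summable.of_nonneg_of_le hg0 hgle hmaj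
  have hslice : ∀ s, Summable (fun t => g (s, t)) := by
    intro s
    exact Summable.of_nonneg_of_le (fun t => hg0 (s,t)) (fun t => hgle (s,t))
      (((split_summable (hSs s)).mul_right B).mul_left (a s))
  calc (∑' n, compA SA a p n * f (compZ SZ p n)) = ∑' n, g (e2 n) := by
        apply tsum_congr; intro n; simp [compA, compZ, hg, mul_assoc]
    _ = ∑' q, g q := e2.tsum_eq g
    _ = ∑' s, ∑' t, g (s, t) := Summable.tsum_prod' hgs hslice
    _ = ∑' s, a s * ∑' t, SA (p s) t * f (SZ (p s) t) := by
        apply tsum_congr; intro s; simp only [hg]; rw [tsum_mul_left]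

include HS hG in
theorem comp_summable {f : (K → ℝ) → ℝ} {B : ℝ}
    (hf : ∀ ξ ∈ stdSimplex ℝ K, 0 ≤ f ξ ∧ f ξ ≤ B) :
    Summable (fun n => compA SA a p n * f (compZ SZ p n)) := by
  have hSs : ∀ s, IsSplit (p s) (SA (p s)) (SZ (p s)) := fun s => HS _ (hG.2.2 s)
  have hA0 : ∀ n, 0 ≤ compA SA a p n := fun n =>
    mul_nonneg (hG.1 _) ((hSs (e2 n).1).1 (e2 n).2)
  have hZ : ∀ n, compZ SZ p n ∈ stdSimplex ℝ K := fun n => (hSs (e2 n).1).2.1 (e2 n).2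
  have hAsum : Summable (compA SA a p) := by
    by_contra hs
    have h0 := tsum_eq_zero_of_not_summable (f := compA SA a p) hs
    have h1 := tsum_comp HS hG (f := fun _ => (1:ℝ)) (B := 1)
      (fun ξ _ => ⟨zero_le_one, le_refl 1⟩)
    simp only [mul_one] at h1
    rw [h0] at h1
    have : ∀ s:ℕ, a s * ∑' t, SA (p s) t = a s := by
      intro s; rw [(hSs s).2.2.1, mul_one]
    rw [tsum_congr this, hG.2.1] at h1
    norm_num at h1
  exact summable_mul_bound hA0 hAsum (fun n => (hf _ (hZ n)).1) (fun n => (hf _ (hZ n)).2)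

include HS hG in
theorem comp_good : GoodM (compA SA a p) (compZ SZ p) := by
  have hSs : ∀ s, IsSplit (p s) (SA (p s)) (SZ (p s)) := fun s => HS _ (hG.2.2 s)
  refine ⟨fun n => mul_nonneg (hG.1 _) ((hSs (e2 n).1).1 (e2 n).2), ?_,
    fun n => (hSs (e2 n).1).2.1 (e2 n).2⟩
  have h1 := tsum_comp HS hG (f := fun _ => (1:ℝ)) (B := 1) (fun ξ _ => ⟨zero_le_one, le_refl 1⟩)
  simp only [mul_one] at h1
  rw [h1, tsum_congr (fun s => by rw [(hSs s).2.2.1, mul_one]), hG.2.1]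

/-- The barycenter of a discrete measure. -/
def bar (a : ℕ → ℝ) (p : ℕ → K → ℝ) : K → ℝ := fun ℓ => ∑' s, a s * p s ℓ

include HS hG in
theorem bar_comp (ℓ : K) : bar (compA SA a p) (compZ SZ p) ℓ = bar a p ℓ := by
  have hSs : ∀ s, IsSplit (p s) (SA (p s)) (SZ (p s)) := fun s => HS _ (hG.2.2 s)
  have h1 := tsum_comp HS hG (f := fun ξ => ξ ℓ) (B := 1) (fun ξ hξ => coord_bounds hξ ℓ)
  rw [bar, h1]
  exact tsum_congr fun s => by rw [(hSs s).2.2.2 ℓ]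

include hG in
theorem bar_mem_simplex : bar a p ∈ stdSimplex ℝ K := by
  constructor
  · intro ℓ
    exact tsum_nonneg fun s => mul_nonneg (hG.1 s) ((hG.2.2 s).1 ℓ)
  · have hsumm : ∀ ℓ : K, Summable (fun s => a s * p s ℓ) := fun ℓ =>
      summable_mul_bound hG.1 hG.summable (fun s => ((hG.2.2 s)).1 ℓ)
        (fun s => (coord_bounds (hG.2.2 s) ℓ).2)
    calc ∑ ℓ, bar a p ℓ = ∑' s, ∑ ℓ, a s * p s ℓ :=
          (Summable.tsum_finsetSum (fun ℓ _ => hsumm ℓ)).symm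
      _ = ∑' s, a s := by
          apply tsum_congr; intro s
          rw [← Finset.mul_sum, (hG.2.2 s).2, mul_one]
      _ = 1 := hG.2.1

include HS hG in
theorem comp_isSplit : IsSplit (bar a p) (compA SA a p) (compZ SZ p) := by
  have hg := comp_good HS hG
  exact ⟨hg.1, hg.2.2, hg.2.1, fun ℓ => bar_comp HS hG ℓ⟩

end MPAux3

namespace MPAux4
open scoped BigOperators
open MPAux MPAux2 MPAux3
set_option linter.unusedSectionVars false

variable {K : Type*} [Fintype K] [Nonempty K] [DecidableEq K]
variable {M : Matrix K K ℝ} (hM : IsStochastic M)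
variable {u : (K → ℝ) → ℝ} (hu0 : ∀ ξ ∈ stdSimplex ℝ K, 0 ≤ u ξ)
variable {C : ℝ} (hC : IsLUB (u '' stdSimplex ℝ K) C)
variable {v : ℝ → (K → ℝ) → ℝ} (hv : IsValueFamily M u C v)

/-- Points of the composition after the Markov transition. -/
def stepP (SZ : (K → ℝ) → ℕ → (K → ℝ)) (M : Matrix K K ℝ) (p : ℕ → K → ℝ) : ℕ → K → ℝ :=
  fun n => Matrix.vecMul (compZ SZ p n) M

include hM hu0 hC hv in
theorem f_bounds {δ : ℝ} (hδ : δ ∈ Set.Ico (0:ℝ) 1) :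
    ∀ ξ ∈ stdSimplex ℝ K, 0 ≤ (1-δ) * u ξ + δ * v δ (Matrix.vecMul ξ M) ∧
      (1-δ) * u ξ + δ * v δ (Matrix.vecMul ξ M) ≤ C := by
  intro ξ hξ
  have hvb := (hv δ hδ).1 _ (vecMul_mem_simplex hM hξ)
  have hub := hu0 _ hξ
  have huc := u_le_C hC _ hξ
  have h1 : (0:ℝ) ≤ 1 - δ := by linarith [hδ.2]
  have h2 : (0:ℝ) ≤ δ := hδ.1
  constructor
  · nlinarith
  · nlinarith

theorem E_bounds {a : ℕ → ℝ} {p : ℕ → K → ℝ} (hG : GoodM a p) {f : (K → ℝ) → ℝ} {B : ℝ}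
    (hf : ∀ ξ ∈ stdSimplex ℝ K, 0 ≤ f ξ ∧ f ξ ≤ B) :
    0 ≤ E a p f ∧ E a p f ≤ B := by
  have hsum : Summable (fun s => a s * f (p s)) :=
    summable_mul_bound hG.1 hG.summable (fun s => (hf _ (hG.2.2 s)).1)
      (fun s => (hf _ (hG.2.2 s)).2)
  constructor
  · exact tsum_nonneg fun s => mul_nonneg (hG.1 s) (hf _ (hG.2.2 s)).1
  · calc E a p f ≤ ∑' s, a s * B :=
        Summable.tsum_le_tsum (fun s => mul_le_mul_of_nonneg_left (hf _ (hG.2.2 s)).2 (hG.1 s))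
          hsum (hG.summable.mul_right B)
      _ = B := by rw [tsum_mul_right, hG.2.1, one_mul]

variable {SA : (K → ℝ) → ℕ → ℝ} {SZ : (K → ℝ) → ℕ → (K → ℝ)}
variable {a : ℕ → ℝ} {p : ℕ → K → ℝ}
variable (HS : ∀ ξ ∈ stdSimplex ℝ K, IsSplit ξ (SA ξ) (SZ ξ))
variable (hG : GoodM a p)

include HS hG hM hu0 hC hv in
theorem comp_payoff_decomp {δ : ℝ} (hδ : δ ∈ Set.Ico (0:ℝ) 1) :
    (∑' s, a s * splitPayoff M u δ (v δ) (SA (p s)) (SZ (p s)))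
      = (1-δ) * (∑' n, compA SA a p n * u (compZ SZ p n))
        + δ * (∑' n, compA SA a p n * v δ (stepP SZ M p n)) := by
  have hfb := f_bounds hM hu0 hC hv hδ
  have h1 := tsum_comp HS hG (f := fun ξ => (1-δ) * u ξ + δ * v δ (Matrix.vecMul ξ M))
    (B := C) hfb
  have hsum1 : Summable (fun n => compA SA a p n * u (compZ SZ p n)) :=
    comp_summable HS hG (f := u) (B := C) (fun ξ hξ => ⟨hu0 ξ hξ, u_le_C hC ξ hξ⟩)
  have hsum2 : Summable (fun n => compA SA a p n * v δ (stepP SZ M p n)) :=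
    comp_summable HS hG (f := fun ξ => v δ (Matrix.vecMul ξ M)) (B := C)
      (fun ξ hξ => (hv δ hδ).1 _ (vecMul_mem_simplex hM hξ))
  calc (∑' s, a s * splitPayoff M u δ (v δ) (SA (p s)) (SZ (p s)))
      = ∑' n, compA SA a p n * ((1-δ) * u (compZ SZ p n)
          + δ * v δ (Matrix.vecMul (compZ SZ p n) M)) := h1.symm
    _ = ∑' n, ((1-δ) * (compA SA a p n * u (compZ SZ p n))
          + δ * (compA SA a p n * v δ (stepP SZ M p n))) := by
        apply tsum_congr; intro n; simp only [stepP]; ring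
    _ = (1-δ) * (∑' n, compA SA a p n * u (compZ SZ p n))
          + δ * (∑' n, compA SA a p n * v δ (stepP SZ M p n)) := by
        rw [Summable.tsum_add (hsum1.mul_left _) (hsum2.mul_left _), tsum_mul_left, tsum_mul_left]

include HS hG hM hu0 hC hv in
theorem comp_splitPayoff_eq {δ : ℝ} (hδ : δ ∈ Set.Ico (0:ℝ) 1) :
    splitPayoff M u δ (v δ) (compA SA a p) (compZ SZ p)
      = ∑' s, a s * splitPayoff M u δ (v δ) (SA (p s)) (SZ (p s)) :=
  tsum_comp HS hG (f := fun ξ => (1-δ) * u ξ + δ * v δ (Matrix.vecMul ξ M)) (B := C)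
    (f_bounds hM hu0 hC hv hδ)

include HS hG hM hu0 hC hv in
theorem sum_splitPayoff_le_E {δ : ℝ} (hδ : δ ∈ Set.Ico (0:ℝ) 1) :
    (∑' s, a s * splitPayoff M u δ (v δ) (SA (p s)) (SZ (p s))) ≤ E a p (v δ) := by
  have hpt : ∀ s, a s * splitPayoff M u δ (v δ) (SA (p s)) (SZ (p s)) ≤ a s * v δ (p s) :=
    fun s => mul_le_mul_of_nonneg_left
      (v_ge_payoff hM hu0 hC hv hδ (hG.2.2 s) (HS _ (hG.2.2 s))) (hG.1 s)
  refine Summable.tsum_le_tsum hpt ?_ ?_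
  · exact summable_mul_bound hG.1 hG.summable
      (fun s => (splitPayoff_bounds hM hu0 hC hv hδ (HS _ (hG.2.2 s))).1)
      (fun s => (splitPayoff_bounds hM hu0 hC hv hδ (HS _ (hG.2.2 s))).2)
  · exact summable_mul_bound hG.1 hG.summable
      (fun s => ((hv δ hδ).1 _ (hG.2.2 s)).1) (fun s => ((hv δ hδ).1 _ (hG.2.2 s)).2)

include hM hu0 hC hv in
theorem chooser {δ : ℝ} (hδ : δ ∈ Set.Ico (0:ℝ) 1) {ε : ℝ} (hε : 0 < ε) :
    ∃ (SA' : (K → ℝ) → ℕ → ℝ) (SZ' : (K → ℝ) → ℕ → (K → ℝ)),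
      (∀ ξ ∈ stdSimplex ℝ K, IsSplit ξ (SA' ξ) (SZ' ξ)) ∧
      (∀ ξ ∈ stdSimplex ℝ K, v δ ξ ≤ splitPayoff M u δ (v δ) (SA' ξ) (SZ' ξ) + ε) := by
  have h : ∀ ξ : K → ℝ, ∃ σ : (ℕ → ℝ) × (ℕ → K → ℝ), ξ ∈ stdSimplex ℝ K →
      (IsSplit ξ σ.1 σ.2 ∧ v δ ξ ≤ splitPayoff M u δ (v δ) σ.1 σ.2 + ε) := by
    intro ξ
    by_cases hξ : ξ ∈ stdSimplex ℝ K
    · obtain ⟨α, ζ, hs, hle⟩ := v_exists_split hM hu0 hC hv hδ hξ hε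
      exact ⟨(α, ζ), fun _ => ⟨hs, hle⟩⟩
    · exact ⟨(fun _ => 0, fun _ _ => 0), fun h' => absurd h' hξ⟩
  choose σf hσf using h
  exact ⟨fun ξ => (σf ξ).1, fun ξ => (σf ξ).2, fun ξ hξ => (hσf ξ hξ).1, fun ξ hξ => (hσf ξ hξ).2⟩

include hM hu0 hC hv hG in
theorem jensen {δ : ℝ} (hδ : δ ∈ Set.Ico (0:ℝ) 1) :
    E a p (v δ) ≤ v δ (bar a p) := by
  have hbar := bar_mem_simplex hG
  refine le_of_forall_pos_le_add ?_
  intro ε hε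
  obtain ⟨SA', SZ', HS', Hopt⟩ := chooser hM hu0 hC hv hδ hε
  have hsp : ∀ s:ℕ, 0 ≤ splitPayoff M u δ (v δ) (SA' (p s)) (SZ' (p s)) ∧
      splitPayoff M u δ (v δ) (SA' (p s)) (SZ' (p s)) ≤ C :=
    fun s => splitPayoff_bounds hM hu0 hC hv hδ (HS' _ (hG.2.2 s))
  have hsum_sp : Summable (fun s => a s * splitPayoff M u δ (v δ) (SA' (p s)) (SZ' (p s))) :=
    summable_mul_bound hG.1 hG.summable (fun s => (hsp s).1) (fun s => (hsp s).2)
  have step1 : E a p (v δ)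
      ≤ ∑' s, a s * (splitPayoff M u δ (v δ) (SA' (p s)) (SZ' (p s)) + ε) := by
    refine Summable.tsum_le_tsum (fun s => mul_le_mul_of_nonneg_left (Hopt _ (hG.2.2 s)) (hG.1 s)) ?_ ?_
    · exact summable_mul_bound hG.1 hG.summable
        (fun s => ((hv δ hδ).1 _ (hG.2.2 s)).1) (fun s => ((hv δ hδ).1 _ (hG.2.2 s)).2)
    · exact summable_mul_bound hG.1 hG.summable
        (fun s => add_nonneg (hsp s).1 hε.le)
        (fun s => add_le_add_left (hsp s).2 ε)
  have step2 : (∑' s, a s * (splitPayoff M u δ (v δ) (SA' (p s)) (SZ' (p s)) + ε))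
      = (∑' s, a s * splitPayoff M u δ (v δ) (SA' (p s)) (SZ' (p s))) + ε := by
    calc (∑' s, a s * (splitPayoff M u δ (v δ) (SA' (p s)) (SZ' (p s)) + ε))
        = ∑' s, (a s * splitPayoff M u δ (v δ) (SA' (p s)) (SZ' (p s)) + a s * ε) := by
          apply tsum_congr; intro s; ring
      _ = (∑' s, a s * splitPayoff M u δ (v δ) (SA' (p s)) (SZ' (p s))) + ∑' s, a s * ε :=
          Summable.tsum_add hsum_sp (hG.summable.mul_right ε)
      _ = (∑' s, a s * splitPayoff M u δ (v δ) (SA' (p s)) (SZ' (p s))) + ε := by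
          rw [tsum_mul_right, hG.2.1, one_mul]
  have step3 : (∑' s, a s * splitPayoff M u δ (v δ) (SA' (p s)) (SZ' (p s))) ≤ v δ (bar a p) := by
    rw [← comp_splitPayoff_eq hM hu0 hC hv HS' hG hδ]
    exact v_ge_payoff hM hu0 hC hv hδ hbar (comp_isSplit HS' hG)
  linarith [step1, step2.le, step3]

end MPAux4

namespace MPAux5
open scoped BigOperators
open MPAux MPAux2 MPAux3 MPAux4
set_option linter.unusedSectionVars false

variable {K : Type*} [Fintype K] [Nonempty K] [DecidableEq K]

/-- Pack a finitely-supported measure into an `ℕ`-indexed one. -/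
def packA (w : K → ℝ) : ℕ → ℝ :=
  fun n => if h : n < Fintype.card K then w ((Fintype.equivFin K).symm ⟨n, h⟩) else 0

def packP (q : K → K → ℝ) : ℕ → K → ℝ :=
  fun n => q ((Fintype.equivFin K).symm ⟨n % Fintype.card K, Nat.mod_lt n Fintype.card_pos⟩)

theorem pack_tsum (w : K → ℝ) (q : K → K → ℝ) (f : (K → ℝ) → ℝ) :
    (∑' n, packA w n * f (packP q n)) = ∑ i, w i * f (q i) := by
  have hvanish : ∀ n ∉ Finset.range (Fintype.card K), packA w n * f (packP q n) = 0 := by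
    intro n hn
    rw [Finset.mem_range] at hn
    simp [packA, dif_neg hn]
  rw [tsum_eq_sum hvanish, ← Fin.sum_univ_eq_sum_range (fun n => packA w n * f (packP q n)),
    ← Equiv.sum_comp ((Fintype.equivFin K).symm) (fun k => w k * f (q k))]
  apply Finset.sum_congr rfl
  intro i _
  have h1 : (i : ℕ) < Fintype.card K := i.2
  have h2 : (i : ℕ) % Fintype.card K = (i : ℕ) := Nat.mod_eq_of_lt h1
  simp only [packA, packP, dif_pos h1]
  congr 2 <;> simp [h2, Fin.eta, Equiv.symm_apply_apply]

theorem pack_good {w : K → ℝ} (hw0 : ∀ i, 0 ≤ w i) (hw1 : ∑ i, w i = 1)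
    {q : K → K → ℝ} (hq : ∀ i, q i ∈ stdSimplex ℝ K) : GoodM (packA w) (packP q) := by
  refine ⟨fun n => ?_, ?_, fun n => hq _⟩
  · unfold packA; split
    · exact hw0 _
    · exact le_rfl
  · have := pack_tsum w q (fun _ => (1:ℝ))
    simp only [mul_one] at this
    rw [this, hw1]

theorem pack_bar {w : K → ℝ} {q : K → K → ℝ} (ℓ : K) :
    bar (packA w) (packP q) ℓ = ∑ i, w i * q i ℓ := pack_tsum w q (fun ξ => ξ ℓ)

theorem pack_E (w : K → ℝ) (q : K → K → ℝ) (f : (K → ℝ) → ℝ) :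
    E (packA w) (packP q) f = ∑ i, w i * f (q i) := pack_tsum w q f

end MPAux5

namespace MPAux6
open scoped BigOperators
open MPAux MPAux2 MPAux3 MPAux4 MPAux5
set_option linter.unusedSectionVars false

variable {K : Type*} [Fintype K] [Nonempty K] [DecidableEq K]
variable {ξs : K → (K → ℝ)} (hξs : ∀ i, ξs i ∈ stdSimplex ℝ K)
variable (haff : AffineIndependent ℝ ξs)

include haff in
theorem bary_exists {η : K → ℝ} (hη : η ∈ convexHull ℝ (Set.range ξs)) :
    ∃ lam : K → ℝ, (∀ i, 0 ≤ lam i) ∧ (∑ i, lam i) = 1 ∧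
      ∀ ℓ, (∑ i, lam i * ξs i ℓ) = η ℓ := by
  have hinj : Function.Injective ξs := haff.injective
  have hrange : Set.range ξs = ↑(Finset.image ξs Finset.univ) := by
    simp [Finset.coe_image]
  rw [hrange, Finset.convexHull_eq] at hη
  obtain ⟨w, hw0, hw1, hwc⟩ := hη
  refine ⟨fun i => w (ξs i), fun i => hw0 _ (Finset.mem_image_of_mem ξs (Finset.mem_univ i)),
    ?_, ?_⟩
  · rw [← hw1, Finset.sum_image (fun i _ j _ h => hinj h)]
  · intro ℓ
    have hc := hwc
    rw [Finset.centerMass_eq_of_sum_1 _ _ hw1] at hc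
    rw [Finset.sum_image (fun i _ j _ h => hinj h)] at hc
    have := congrFun hc ℓ
    rw [← this, Finset.sum_apply]
    apply Finset.sum_congr rfl
    intro i _
    simp [Pi.smul_apply, smul_eq_mul]

include haff in
theorem bary_choice :
    ∃ lamf : (K → ℝ) → K → ℝ, ∀ η ∈ convexHull ℝ (Set.range ξs),
      (∀ i, 0 ≤ lamf η i) ∧ (∑ i, lamf η i) = 1 ∧
        ∀ ℓ, (∑ i, lamf η i * ξs i ℓ) = η ℓ := by
  have h : ∀ η : K → ℝ, ∃ lam : K → ℝ, η ∈ convexHull ℝ (Set.range ξs) →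
      ((∀ i, 0 ≤ lam i) ∧ (∑ i, lam i) = 1 ∧ ∀ ℓ, (∑ i, lam i * ξs i ℓ) = η ℓ) := by
    intro η
    by_cases hη : η ∈ convexHull ℝ (Set.range ξs)
    · obtain ⟨lam, h1, h2, h3⟩ := bary_exists haff hη
      exact ⟨lam, fun _ => ⟨h1, h2, h3⟩⟩
    · exact ⟨fun _ => 0, fun h' => absurd h' hη⟩
  choose lamf hlamf using h
  exact ⟨lamf, hlamf⟩

include haff in
theorem weights_unique {d γ : K → ℝ} (hd1 : ∑ i, d i = 1) (hγ1 : ∑ i, γ i = 1)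
    (heq : ∀ ℓ, (∑ i, d i * ξs i ℓ) = ∑ i, γ i * ξs i ℓ) : d = γ := by
  have key := (affineIndependent_iff_eq_of_fintype_affineCombination_eq ℝ ξs).mp haff d γ hd1 hγ1
  apply key
  rw [Finset.affineCombination_eq_linear_combination _ _ _ hd1,
    Finset.affineCombination_eq_linear_combination _ _ _ hγ1]
  funext ℓ
  rw [Finset.sum_apply, Finset.sum_apply]
  simpa [smul_eq_mul] using heq ℓ

variable {M : Matrix K K ℝ} (hM : IsStochastic M)
variable {u : (K → ℝ) → ℝ} (hu0 : ∀ ξ ∈ stdSimplex ℝ K, 0 ≤ u ξ)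
variable {C : ℝ} (hC : IsLUB (u '' stdSimplex ℝ K) C)
variable {v : ℝ → (K → ℝ) → ℝ} (hv : IsValueFamily M u C v)
variable {πM : K → ℝ} {γ : K → ℝ} (hγ0 : ∀ i, 0 ≤ γ i) (hγ1 : ∑ i, γ i = 1)
variable (hγπ : πM = ∑ i, γ i • ξs i)

include hM hu0 hC hv hξs haff hγ0 hγ1 hγπ in
theorem E_ge_W {a : ℕ → ℝ} {p : ℕ → K → ℝ} (hG : GoodM a p)
    (hconvp : ∀ s, p s ∈ convexHull ℝ (Set.range ξs))
    (hbar : ∀ ℓ, MPAux3.bar a p ℓ = πM ℓ)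
    {δ : ℝ} (hδ : δ ∈ Set.Ico (0:ℝ) 1) :
    (∑ i, γ i * v δ (ξs i)) ≤ E a p (v δ) := by
  obtain ⟨lamf, hlamf⟩ := bary_choice haff
  have hlam := fun s => hlamf (p s) (hconvp s)
  -- each lamf coordinate is in [0,1]
  have hlam01 : ∀ s i, 0 ≤ lamf (p s) i ∧ lamf (p s) i ≤ 1 := by
    intro s i
    refine ⟨(hlam s).1 i, ?_⟩
    rw [← (hlam s).2.1]
    exact Finset.single_le_sum (fun j _ => (hlam s).1 j) (Finset.mem_univ i)
  have hvb : ∀ i, 0 ≤ v δ (ξs i) ∧ v δ (ξs i) ≤ C := fun i => (hv δ hδ).1 _ (hξs i)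
  have hCnn : 0 ≤ C := C_nonneg hu0 hC
  -- pointwise concavity at each p s
  have hpt : ∀ s, (∑ i, lamf (p s) i * v δ (ξs i)) ≤ v δ (p s) := by
    intro s
    have hg : GoodM (packA (lamf (p s))) (packP ξs) :=
      pack_good (hlam s).1 (hlam s).2.1 hξs
    have hj := jensen hM hu0 hC hv hg hδ
    have hbp : MPAux3.bar (packA (lamf (p s))) (packP ξs) = p s := by
      funext ℓ
      rw [pack_bar ℓ, (hlam s).2.2 ℓ]
    rw [hbp, pack_E] at hj
    exact hj
  -- summabilities
  have hsum_inner : ∀ i : K, Summable (fun s => a s * (lamf (p s) i * v δ (ξs i))) := by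
    intro i
    refine summable_mul_bound (B := C) hG.1 hG.summable
      (fun s => mul_nonneg (hlam01 s i).1 (hvb i).1)
      (fun s => ?_)
    calc lamf (p s) i * v δ (ξs i) ≤ 1 * C :=
          mul_le_mul (hlam01 s i).2 (hvb i).2 (hvb i).1 zero_le_one
      _ = C := one_mul C
  have hsum_mix : Summable (fun s => a s * ∑ i, lamf (p s) i * v δ (ξs i)) := by
    refine summable_mul_bound (B := C) hG.1 hG.summable
      (fun s => Finset.sum_nonneg fun i _ => mul_nonneg (hlam01 s i).1 (hvb i).1)
      (fun s => ?_)
    calc (∑ i, lamf (p s) i * v δ (ξs i)) ≤ ∑ i, lamf (p s) i * C :=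
          Finset.sum_le_sum fun i _ => mul_le_mul_of_nonneg_left (hvb i).2 (hlam01 s i).1
      _ = C := by rw [← Finset.sum_mul, (hlam s).2.1, one_mul]
  -- step: E ≥ ∑' a_s ∑_i lam_i v_i
  have step1 : (∑' s, a s * ∑ i, lamf (p s) i * v δ (ξs i)) ≤ E a p (v δ) := by
    refine Summable.tsum_le_tsum (fun s => mul_le_mul_of_nonneg_left (hpt s) (hG.1 s)) hsum_mix ?_
    exact summable_mul_bound hG.1 hG.summable
      (fun s => ((hv δ hδ).1 _ (hG.2.2 s)).1) (fun s => ((hv δ hδ).1 _ (hG.2.2 s)).2)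
  -- swap sums
  have step2 : (∑' s, a s * ∑ i, lamf (p s) i * v δ (ξs i))
      = ∑ i, (∑' s, a s * lamf (p s) i) * v δ (ξs i) := by
    calc (∑' s, a s * ∑ i, lamf (p s) i * v δ (ξs i))
        = ∑' s, ∑ i, a s * (lamf (p s) i * v δ (ξs i)) := by
          apply tsum_congr; intro s; rw [Finset.mul_sum]
      _ = ∑ i, ∑' s, a s * (lamf (p s) i * v δ (ξs i)) :=
          Summable.tsum_finsetSum (fun i _ => hsum_inner i)
      _ = ∑ i, (∑' s, a s * lamf (p s) i) * v δ (ξs i) := by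
          apply Finset.sum_congr rfl; intro i _
          rw [← tsum_mul_right]
          apply tsum_congr; intro s; ring
  -- identify the weights
  set d : K → ℝ := fun i => ∑' s, a s * lamf (p s) i with hd
  have hsum_lam : ∀ i : K, Summable (fun s => a s * lamf (p s) i) := fun i =>
    summable_mul_bound hG.1 hG.summable (fun s => (hlam01 s i).1) (fun s => (hlam01 s i).2)
  have hd1 : ∑ i, d i = 1 := by
    calc ∑ i, d i = ∑' s, ∑ i, a s * lamf (p s) i :=
          (Summable.tsum_finsetSum (fun i _ => hsum_lam i)).symm
      _ = ∑' s, a s := by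
          apply tsum_congr; intro s
          rw [← Finset.mul_sum, (hlam s).2.1, mul_one]
      _ = 1 := hG.2.1
  have hπcoord : ∀ ℓ, πM ℓ = ∑ i, γ i * ξs i ℓ := by
    intro ℓ
    have := congrFun hγπ ℓ
    rw [this, Finset.sum_apply]
    apply Finset.sum_congr rfl
    intro i _; simp [smul_eq_mul]
  have hdcoord : ∀ ℓ, (∑ i, d i * ξs i ℓ) = ∑ i, γ i * ξs i ℓ := by
    intro ℓ
    have hsum_lamx : ∀ i : K, Summable (fun s => a s * (lamf (p s) i * ξs i ℓ)) := by
      intro i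
      refine summable_mul_bound (B := 1) hG.1 hG.summable
        (fun s => mul_nonneg (hlam01 s i).1 (coord_bounds (hξs i) ℓ).1)
        (fun s => ?_)
      calc lamf (p s) i * ξs i ℓ ≤ 1 * 1 :=
            mul_le_mul (hlam01 s i).2 (coord_bounds (hξs i) ℓ).2
              (coord_bounds (hξs i) ℓ).1 zero_le_one
        _ = 1 := one_mul 1
    calc (∑ i, d i * ξs i ℓ) = ∑ i, ∑' s, a s * (lamf (p s) i * ξs i ℓ) := by
          apply Finset.sum_congr rfl; intro i _
          rw [hd, ← tsum_mul_right]
          apply tsum_congr; intro s; ring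
      _ = ∑' s, ∑ i, a s * (lamf (p s) i * ξs i ℓ) :=
          (Summable.tsum_finsetSum (fun i _ => hsum_lamx i)).symm
      _ = ∑' s, a s * p s ℓ := by
          apply tsum_congr; intro s
          rw [← Finset.mul_sum]
          congr 1
          exact (hlam s).2.2 ℓ
      _ = πM ℓ := hbar ℓ
      _ = ∑ i, γ i * ξs i ℓ := hπcoord ℓ
  have hdγ : d = γ := weights_unique haff hd1 hγ1 hdcoord
  rw [step2] at step1
  rw [hd] at hdγ
  calc (∑ i, γ i * v δ (ξs i)) = ∑ i, (∑' s, a s * lamf (p s) i) * v δ (ξs i) := by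
        apply Finset.sum_congr rfl; intro i _
        rw [congrFun hdγ i]
    _ ≤ E a p (v δ) := step1
end MPAux6

namespace MPAux7
open scoped BigOperators
open MPAux MPAux2 MPAux3 MPAux4 MPAux5 MPAux6
set_option linter.unusedSectionVars false

variable {K : Type*} [Fintype K] [Nonempty K] [DecidableEq K]

/-- The process: split according to `(SA, SZ)`, then apply the Markov transition. -/
def iterM (SA : (K → ℝ) → ℕ → ℝ) (SZ : (K → ℝ) → ℕ → (K → ℝ)) (M : Matrix K K ℝ)
    (a₀ : ℕ → ℝ) (p₀ : ℕ → K → ℝ) : ℕ → (ℕ → ℝ) × (ℕ → K → ℝ)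
  | 0 => (a₀, p₀)
  | (t+1) => (compA SA (iterM SA SZ M a₀ p₀ t).1 (iterM SA SZ M a₀ p₀ t).2,
      stepP SZ M (iterM SA SZ M a₀ p₀ t).2)

/-- Stage payoff of the process. -/
def cpay (SA : (K → ℝ) → ℕ → ℝ) (SZ : (K → ℝ) → ℕ → (K → ℝ)) (M : Matrix K K ℝ)
    (u : (K → ℝ) → ℝ) (a₀ : ℕ → ℝ) (p₀ : ℕ → K → ℝ) (t : ℕ) : ℝ :=
  ∑' n, compA SA (iterM SA SZ M a₀ p₀ t).1 (iterM SA SZ M a₀ p₀ t).2 n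
    * u (compZ SZ (iterM SA SZ M a₀ p₀ t).2 n)

variable {M : Matrix K K ℝ} (hM : IsStochastic M)
variable {u : (K → ℝ) → ℝ} (hu0 : ∀ ξ ∈ stdSimplex ℝ K, 0 ≤ u ξ)
variable {C : ℝ} (hC : IsLUB (u '' stdSimplex ℝ K) C)
variable {v : ℝ → (K → ℝ) → ℝ} (hv : IsValueFamily M u C v)
variable {SA : (K → ℝ) → ℕ → ℝ} {SZ : (K → ℝ) → ℕ → (K → ℝ)}
variable (HS : ∀ ξ ∈ stdSimplex ℝ K, IsSplit ξ (SA ξ) (SZ ξ))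
variable {a₀ : ℕ → ℝ} {p₀ : ℕ → K → ℝ} (hG0 : GoodM a₀ p₀)

include hM HS in
theorem good_step {a : ℕ → ℝ} {p : ℕ → K → ℝ} (hG : GoodM a p) :
    GoodM (compA SA a p) (stepP SZ M p) := by
  obtain ⟨h1, h2, h3⟩ := comp_good HS hG
  exact ⟨h1, h2, fun n => vecMul_mem_simplex hM (h3 n)⟩

include hM HS hG0 in
theorem good_iter : ∀ t, GoodM (iterM SA SZ M a₀ p₀ t).1 (iterM SA SZ M a₀ p₀ t).2 := by
  intro t
  induction t with
  | zero => exact hG0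
  | succ t ih => exact good_step hM HS ih

include hM hu0 hC HS hG0 in
theorem cpay_bounds (t : ℕ) : 0 ≤ cpay SA SZ M u a₀ p₀ t ∧ cpay SA SZ M u a₀ p₀ t ≤ C := by
  have hg := comp_good HS (good_iter hM HS hG0 t)
  exact E_bounds hg (fun ξ hξ => ⟨hu0 ξ hξ, u_le_C hC ξ hξ⟩)

include hM HS in
theorem bar_step {a : ℕ → ℝ} {p : ℕ → K → ℝ} (hG : GoodM a p) (ℓ : K) :
    MPAux3.bar (compA SA a p) (stepP SZ M p) ℓ
      = ∑ ℓ', MPAux3.bar a p ℓ' * M ℓ' ℓ := by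
  have hgc := comp_good HS hG
  have hsummand : ∀ ℓ' : K, Summable (fun n => compA SA a p n * (compZ SZ p n ℓ' * M ℓ' ℓ)) := by
    intro ℓ'
    exact summable_mul_bound (B := M ℓ' ℓ) hgc.1 hgc.summable
      (fun n => mul_nonneg (coord_bounds (hgc.2.2 n) ℓ').1 (hM.1 ℓ' ℓ))
      (fun n => by
        calc compZ SZ p n ℓ' * M ℓ' ℓ ≤ 1 * M ℓ' ℓ :=
              mul_le_mul_of_nonneg_right (coord_bounds (hgc.2.2 n) ℓ').2 (hM.1 ℓ' ℓ)
          _ = M ℓ' ℓ := one_mul _)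
  calc MPAux3.bar (compA SA a p) (stepP SZ M p) ℓ
      = ∑' n, ∑ ℓ', compA SA a p n * (compZ SZ p n ℓ' * M ℓ' ℓ) := by
        apply tsum_congr; intro n
        have hst : stepP SZ M p n ℓ = ∑ ℓ', compZ SZ p n ℓ' * M ℓ' ℓ := by
          simp [stepP, Matrix.vecMul, dotProduct]
        rw [hst, Finset.mul_sum]
    _ = ∑ ℓ', ∑' n, compA SA a p n * (compZ SZ p n ℓ' * M ℓ' ℓ) :=
        Summable.tsum_finsetSum (fun ℓ' _ => hsummand ℓ')
    _ = ∑ ℓ', MPAux3.bar a p ℓ' * M ℓ' ℓ := by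
        apply Finset.sum_congr rfl; intro ℓ' _
        rw [← bar_comp HS hG ℓ', MPAux3.bar, ← tsum_mul_right]
        apply tsum_congr; intro n; ring

include hM HS hG0 in
theorem bar_iter {πM : K → ℝ} (hπinv : Matrix.vecMul πM M = πM)
    (hb0 : ∀ ℓ, MPAux3.bar a₀ p₀ ℓ = πM ℓ) :
    ∀ t ℓ, MPAux3.bar (iterM SA SZ M a₀ p₀ t).1 (iterM SA SZ M a₀ p₀ t).2 ℓ = πM ℓ := by
  intro t
  induction t with
  | zero => exact hb0
  | succ t ih =>
    intro ℓ
    have hstep := bar_step hM HS (good_iter hM HS hG0 t) ℓ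
    calc MPAux3.bar (iterM SA SZ M a₀ p₀ (t+1)).1 (iterM SA SZ M a₀ p₀ (t+1)).2 ℓ
        = ∑ ℓ', MPAux3.bar (iterM SA SZ M a₀ p₀ t).1 (iterM SA SZ M a₀ p₀ t).2 ℓ' * M ℓ' ℓ :=
          hstep
      _ = ∑ ℓ', πM ℓ' * M ℓ' ℓ := Finset.sum_congr rfl (fun ℓ' _ => by rw [ih ℓ'])
      _ = πM ℓ := by
          rw [← congrFun hπinv ℓ]
          simp [Matrix.vecMul, dotProduct]

include hM HS hG0 in
theorem conv_iter {ξs : K → (K → ℝ)}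
    (hconv : ∀ ξ ∈ stdSimplex ℝ K, Matrix.vecMul ξ M ∈ convexHull ℝ (Set.range ξs))
    (hp0 : ∀ n, p₀ n ∈ convexHull ℝ (Set.range ξs)) :
    ∀ t n, (iterM SA SZ M a₀ p₀ t).2 n ∈ convexHull ℝ (Set.range ξs) := by
  intro t
  induction t with
  | zero => exact hp0
  | succ t ih =>
    intro n
    have hg := comp_good HS (good_iter hM HS hG0 t)
    exact hconv _ (hg.2.2 n)

include hM hu0 hC hv HS in
theorem stepLB {a : ℕ → ℝ} {p : ℕ → K → ℝ} (hG : GoodM a p) {δ : ℝ}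
    (hδ : δ ∈ Set.Ico (0:ℝ) 1) :
    (1-δ) * (∑' n, compA SA a p n * u (compZ SZ p n))
      + δ * E (compA SA a p) (stepP SZ M p) (v δ) ≤ E a p (v δ) := by
  have hdec := comp_payoff_decomp hM hu0 hC hv HS hG hδ
  have hle := sum_splitPayoff_le_E hM hu0 hC hv HS hG hδ
  rw [hdec] at hle
  exact hle

include hM hu0 hC hv HS in
theorem stepUB {a : ℕ → ℝ} {p : ℕ → K → ℝ} (hG : GoodM a p) {δ : ℝ}
    (hδ : δ ∈ Set.Ico (0:ℝ) 1) {ε : ℝ} (hε : 0 < ε)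
    (Hopt : ∀ ξ ∈ stdSimplex ℝ K, v δ ξ ≤ splitPayoff M u δ (v δ) (SA ξ) (SZ ξ) + ε) :
    E a p (v δ) ≤ (1-δ) * (∑' n, compA SA a p n * u (compZ SZ p n))
      + δ * E (compA SA a p) (stepP SZ M p) (v δ) + ε := by
  have hsp : ∀ s:ℕ, 0 ≤ splitPayoff M u δ (v δ) (SA (p s)) (SZ (p s)) ∧
      splitPayoff M u δ (v δ) (SA (p s)) (SZ (p s)) ≤ C :=
    fun s => splitPayoff_bounds hM hu0 hC hv hδ (HS _ (hG.2.2 s))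
  have hsum_sp : Summable (fun s => a s * splitPayoff M u δ (v δ) (SA (p s)) (SZ (p s))) :=
    summable_mul_bound hG.1 hG.summable (fun s => (hsp s).1) (fun s => (hsp s).2)
  have step1 : E a p (v δ)
      ≤ ∑' s, a s * (splitPayoff M u δ (v δ) (SA (p s)) (SZ (p s)) + ε) := by
    refine Summable.tsum_le_tsum (fun s => mul_le_mul_of_nonneg_left (Hopt _ (hG.2.2 s)) (hG.1 s)) ?_ ?_
    · exact summable_mul_bound hG.1 hG.summable
        (fun s => ((hv δ hδ).1 _ (hG.2.2 s)).1) (fun s => ((hv δ hδ).1 _ (hG.2.2 s)).2)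
    · exact summable_mul_bound hG.1 hG.summable
        (fun s => add_nonneg (hsp s).1 hε.le)
        (fun s => add_le_add_left (hsp s).2 ε)
  have step2 : (∑' s, a s * (splitPayoff M u δ (v δ) (SA (p s)) (SZ (p s)) + ε))
      = (∑' s, a s * splitPayoff M u δ (v δ) (SA (p s)) (SZ (p s))) + ε := by
    calc (∑' s, a s * (splitPayoff M u δ (v δ) (SA (p s)) (SZ (p s)) + ε))
        = ∑' s, (a s * splitPayoff M u δ (v δ) (SA (p s)) (SZ (p s)) + a s * ε) := by
          apply tsum_congr; intro s; ring
      _ = (∑' s, a s * splitPayoff M u δ (v δ) (SA (p s)) (SZ (p s))) + ∑' s, a s * ε :=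
          Summable.tsum_add hsum_sp (hG.summable.mul_right ε)
      _ = (∑' s, a s * splitPayoff M u δ (v δ) (SA (p s)) (SZ (p s))) + ε := by
          rw [tsum_mul_right, hG.2.1, one_mul]
  have hdec := comp_payoff_decomp hM hu0 hC hv HS hG hδ
  rw [step2, hdec] at step1
  exact step1

include hM hu0 hC hv HS hG0 in
theorem LB_iter {δ : ℝ} (hδ : δ ∈ Set.Ico (0:ℝ) 1) :
    ∀ (T n : ℕ),
      (1-δ) * (∑ t ∈ Finset.range T, δ^t * cpay SA SZ M u a₀ p₀ (n+t))
        + δ^T * E (iterM SA SZ M a₀ p₀ (n+T)).1 (iterM SA SZ M a₀ p₀ (n+T)).2 (v δ)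
      ≤ E (iterM SA SZ M a₀ p₀ n).1 (iterM SA SZ M a₀ p₀ n).2 (v δ) := by
  intro T
  induction T with
  | zero => intro n; simp
  | succ T ih =>
    intro n
    have h1 := stepLB hM hu0 hC hv HS (good_iter hM HS hG0 n) hδ
    have h2 := ih (n+1)
    have hδ0 : (0:ℝ) ≤ δ := hδ.1
    have hδT : (0:ℝ) ≤ δ^T := pow_nonneg hδ0 T
    -- rewrite the sum over range (T+1)
    have hsum : (∑ t ∈ Finset.range (T+1), δ^t * cpay SA SZ M u a₀ p₀ (n+t))
        = cpay SA SZ M u a₀ p₀ n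
          + δ * ∑ t ∈ Finset.range T, δ^t * cpay SA SZ M u a₀ p₀ (n+1+t) := by
      rw [Finset.sum_range_succ' (fun t => δ^t * cpay SA SZ M u a₀ p₀ (n+t)) T]
      simp only [pow_zero, one_mul, Nat.add_zero, Finset.mul_sum]
      rw [add_comm]
      congr 1
      apply Finset.sum_congr rfl
      intro t _
      have : n + (t+1) = n+1+t := by omega
      rw [this]; ring
    have key : δ * ((1-δ) * (∑ t ∈ Finset.range T, δ^t * cpay SA SZ M u a₀ p₀ (n+1+t))
        + δ^T * E (iterM SA SZ M a₀ p₀ (n+1+T)).1 (iterM SA SZ M a₀ p₀ (n+1+T)).2 (v δ))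
        ≤ δ * E (iterM SA SZ M a₀ p₀ (n+1)).1 (iterM SA SZ M a₀ p₀ (n+1)).2 (v δ) :=
      mul_le_mul_of_nonneg_left h2 hδ0
    have hre : n + (T+1) = n+1+T := by omega
    rw [hsum, hre]
    have hEstep : E (compA SA (iterM SA SZ M a₀ p₀ n).1 (iterM SA SZ M a₀ p₀ n).2)
        (stepP SZ M (iterM SA SZ M a₀ p₀ n).2) (v δ)
        = E (iterM SA SZ M a₀ p₀ (n+1)).1 (iterM SA SZ M a₀ p₀ (n+1)).2 (v δ) := rfl
    rw [hEstep] at h1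
    have hcn : (∑' m, compA SA (iterM SA SZ M a₀ p₀ n).1 (iterM SA SZ M a₀ p₀ n).2 m
        * u (compZ SZ (iterM SA SZ M a₀ p₀ n).2 m)) = cpay SA SZ M u a₀ p₀ n := rfl
    rw [hcn] at h1
    rw [pow_succ]
    linarith [key, h1]

include hM hu0 hC hv HS hG0 in
theorem UB_iter {δ : ℝ} (hδ : δ ∈ Set.Ico (0:ℝ) 1) {ε : ℝ} (hε : 0 < ε)
    (Hopt : ∀ ξ ∈ stdSimplex ℝ K, v δ ξ ≤ splitPayoff M u δ (v δ) (SA ξ) (SZ ξ) + ε) :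
    ∀ (T n : ℕ),
      E (iterM SA SZ M a₀ p₀ n).1 (iterM SA SZ M a₀ p₀ n).2 (v δ)
      ≤ (1-δ) * (∑ t ∈ Finset.range T, δ^t * cpay SA SZ M u a₀ p₀ (n+t))
        + ε * (∑ t ∈ Finset.range T, δ^t)
        + δ^T * E (iterM SA SZ M a₀ p₀ (n+T)).1 (iterM SA SZ M a₀ p₀ (n+T)).2 (v δ) := by
  intro T
  induction T with
  | zero => intro n; simp
  | succ T ih =>
    intro n
    have h1 := stepUB hM hu0 hC hv HS (good_iter hM HS hG0 n) hδ hε Hopt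
    have h2 := ih (n+1)
    have hδ0 : (0:ℝ) ≤ δ := hδ.1
    have hsum : (∑ t ∈ Finset.range (T+1), δ^t * cpay SA SZ M u a₀ p₀ (n+t))
        = cpay SA SZ M u a₀ p₀ n
          + δ * ∑ t ∈ Finset.range T, δ^t * cpay SA SZ M u a₀ p₀ (n+1+t) := by
      rw [Finset.sum_range_succ' (fun t => δ^t * cpay SA SZ M u a₀ p₀ (n+t)) T]
      simp only [pow_zero, one_mul, Nat.add_zero, Finset.mul_sum]
      rw [add_comm]
      congr 1
      apply Finset.sum_congr rfl
      intro t _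
      have : n + (t+1) = n+1+t := by omega
      rw [this]; ring
    have hgeo : (∑ t ∈ Finset.range (T+1), δ^t) = 1 + δ * ∑ t ∈ Finset.range T, δ^t := by
      rw [Finset.sum_range_succ' (fun t => δ^t) T]
      simp only [pow_zero, Finset.mul_sum]
      rw [add_comm]
      congr 1
      apply Finset.sum_congr rfl
      intro t _
      ring
    have key : δ * E (iterM SA SZ M a₀ p₀ (n+1)).1 (iterM SA SZ M a₀ p₀ (n+1)).2 (v δ)
        ≤ δ * ((1-δ) * (∑ t ∈ Finset.range T, δ^t * cpay SA SZ M u a₀ p₀ (n+1+t))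
          + ε * (∑ t ∈ Finset.range T, δ^t)
          + δ^T * E (iterM SA SZ M a₀ p₀ (n+1+T)).1 (iterM SA SZ M a₀ p₀ (n+1+T)).2 (v δ)) :=
      mul_le_mul_of_nonneg_left h2 hδ0
    have hre : n + (T+1) = n+1+T := by omega
    rw [hsum, hgeo, hre]
    have hEstep : E (compA SA (iterM SA SZ M a₀ p₀ n).1 (iterM SA SZ M a₀ p₀ n).2)
        (stepP SZ M (iterM SA SZ M a₀ p₀ n).2) (v δ)
        = E (iterM SA SZ M a₀ p₀ (n+1)).1 (iterM SA SZ M a₀ p₀ (n+1)).2 (v δ) := rfl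
    rw [hEstep] at h1
    have hcn : (∑' m, compA SA (iterM SA SZ M a₀ p₀ n).1 (iterM SA SZ M a₀ p₀ n).2 m
        * u (compZ SZ (iterM SA SZ M a₀ p₀ n).2 m)) = cpay SA SZ M u a₀ p₀ n := rfl
    rw [hcn] at h1
    rw [pow_succ]
    linarith [key, h1]

end MPAux7

open MPAux MPAux2 MPAux3 MPAux4 MPAux5 MPAux6 MPAux7

set_option linter.unusedSectionVars false in
theorem markovian_persuasion_weighted_value_nondecreasing
    {K : Type*} [Fintype K] [Nonempty K] [DecidableEq K]
    (M : Matrix K K ℝ) (hM : IsStochastic M)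
    (hirr : ∀ ℓ ℓ' : K, ∃ n : ℕ, 1 ≤ n ∧ 0 < (M ^ n) ℓ ℓ')
    (u : (K → ℝ) → ℝ) (hu0 : ∀ ξ ∈ stdSimplex ℝ K, 0 ≤ u ξ)
    (husc : UpperSemicontinuousOn u (stdSimplex ℝ K))
    (C : ℝ) (hC : IsLUB (u '' stdSimplex ℝ K) C)
    (v : ℝ → (K → ℝ) → ℝ) (hv : IsValueFamily M u C v)
    (πM : K → ℝ) (hπ : πM ∈ stdSimplex ℝ K) (hπinv : Matrix.vecMul πM M = πM)
    (hπuniq : ∀ π' ∈ stdSimplex ℝ K, Matrix.vecMul π' M = π' → π' = πM)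
    (ξs : K → (K → ℝ)) (hξs : ∀ i, ξs i ∈ stdSimplex ℝ K)
    (haff : AffineIndependent ℝ ξs)
    (hconv : ∀ ξ ∈ stdSimplex ℝ K, Matrix.vecMul ξ M ∈ convexHull ℝ (Set.range ξs))
    (γ : K → ℝ) (hγ0 : ∀ i, 0 ≤ γ i) (hγ1 : ∑ i, γ i = 1)
    (hγπ : πM = ∑ i, γ i • ξs i) :
    ∀ δ₁ δ₂ : ℝ, 0 ≤ δ₁ → δ₁ ≤ δ₂ → δ₂ < 1 →
      (∑ i, γ i * v δ₁ (ξs i)) ≤ ∑ i, γ i * v δ₂ (ξs i) := by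
  intro δ₁ δ₂ hδ₁0 h12 hδ₂1
  have hδ₁ : δ₁ ∈ Set.Ico (0:ℝ) 1 := ⟨hδ₁0, lt_of_le_of_lt h12 hδ₂1⟩
  have hδ₂ : δ₂ ∈ Set.Ico (0:ℝ) 1 := ⟨le_trans hδ₁0 h12, hδ₂1⟩
  have hCnn : 0 ≤ C := C_nonneg hu0 hC
  have h1δ₁ : (0:ℝ) < 1 - δ₁ := by linarith [hδ₁.2]
  have h1δ₂ : (0:ℝ) < 1 - δ₂ := by linarith
  have hπcoord : ∀ ℓ, πM ℓ = ∑ i, γ i * ξs i ℓ := by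
    intro ℓ
    rw [congrFun hγπ ℓ, Finset.sum_apply]
    exact Finset.sum_congr rfl fun i _ => by simp [smul_eq_mul]
  refine le_of_forall_pos_le_add ?_
  intro ε hε
  have hε' : 0 < ε * (1 - δ₁) := mul_pos hε h1δ₁
  obtain ⟨SA, SZ, HS, Hopt⟩ := chooser hM hu0 hC hv hδ₁ hε'
  have hG0 : GoodM (packA γ) (packP ξs) := pack_good hγ0 hγ1 hξs
  set a₀ : ℕ → ℝ := packA γ
  set p₀ : ℕ → K → ℝ := packP ξs
  -- abbreviations
  set c : ℕ → ℝ := cpay SA SZ M u a₀ p₀ with hcdef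
  have hc : ∀ t, 0 ≤ c t ∧ c t ≤ C := fun t => cpay_bounds hM hu0 hC HS hG0 t
  have hGn : ∀ n, GoodM (iterM SA SZ M a₀ p₀ n).1 (iterM SA SZ M a₀ p₀ n).2 :=
    good_iter hM HS hG0
  have hbar0 : ∀ ℓ, MPAux3.bar a₀ p₀ ℓ = πM ℓ := by
    intro ℓ
    rw [show MPAux3.bar a₀ p₀ ℓ = ∑ i, γ i * ξs i ℓ from pack_bar ℓ, hπcoord ℓ]
  have hbarn := bar_iter hM HS hG0 hπinv hbar0
  have hconvn : ∀ n s, (iterM SA SZ M a₀ p₀ n).2 s ∈ convexHull ℝ (Set.range ξs) :=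
    conv_iter hM HS hG0 hconv
      (fun n => subset_convexHull ℝ (Set.range ξs) (Set.mem_range_self _))
  -- W₁ is below the expectation at every stage
  have hW₁le : ∀ n, (∑ i, γ i * v δ₁ (ξs i))
      ≤ E (iterM SA SZ M a₀ p₀ n).1 (iterM SA SZ M a₀ p₀ n).2 (v δ₁) := fun n =>
    E_ge_W hξs haff hM hu0 hC hv hγ0 hγ1 hγπ (hGn n) (hconvn n) (hbarn n) hδ₁
  have hEb : ∀ (δ : ℝ), δ ∈ Set.Ico (0:ℝ) 1 → ∀ n,
      0 ≤ E (iterM SA SZ M a₀ p₀ n).1 (iterM SA SZ M a₀ p₀ n).2 (v δ) ∧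
      E (iterM SA SZ M a₀ p₀ n).1 (iterM SA SZ M a₀ p₀ n).2 (v δ) ≤ C := fun δ hδ n =>
    E_bounds (hGn n) (fun ξ hξ => (hv δ hδ).1 ξ hξ)
  -- summability of discounted streams
  have hgs₁ : Summable (fun t : ℕ => δ₁ ^ t) := summable_geometric_of_lt_one hδ₁.1 hδ₁.2
  have hgs₂ : Summable (fun t : ℕ => δ₂ ^ t) := summable_geometric_of_lt_one hδ₂.1 hδ₂.2
  have hsc₁ : ∀ n, Summable (fun t => δ₁ ^ t * c (n + t)) := fun n =>
    Summable.of_nonneg_of_le (fun t => mul_nonneg (pow_nonneg hδ₁.1 t) (hc _).1)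
      (fun t => mul_le_mul_of_nonneg_left (hc _).2 (pow_nonneg hδ₁.1 t)) (hgs₁.mul_right C)
  have hsc₂ : Summable (fun t => δ₂ ^ t * c t) :=
    Summable.of_nonneg_of_le (fun t => mul_nonneg (pow_nonneg hδ₂.1 t) (hc _).1)
      (fun t => mul_le_mul_of_nonneg_left (hc _).2 (pow_nonneg hδ₂.1 t)) (hgs₂.mul_right C)
  set F : ℕ → ℝ := fun n => (1 - δ₁) * ∑' t, δ₁ ^ t * c (n + t) with hFdef
  -- F is bounded in [0, C]
  have hF0 : ∀ n, 0 ≤ F n := fun n =>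
    mul_nonneg h1δ₁.le (tsum_nonneg fun t => mul_nonneg (pow_nonneg hδ₁.1 t) (hc _).1)
  have hFC : ∀ n, F n ≤ C := by
    intro n
    have h1 : (∑' t, δ₁ ^ t * c (n + t)) ≤ ∑' t : ℕ, δ₁ ^ t * C :=
      Summable.tsum_le_tsum (fun t => mul_le_mul_of_nonneg_left (hc _).2 (pow_nonneg hδ₁.1 t))
        (hsc₁ n) (hgs₁.mul_right C)
    have h2 : (∑' t : ℕ, δ₁ ^ t * C) = (1 - δ₁)⁻¹ * C := by
      rw [tsum_mul_right, tsum_geometric_of_lt_one hδ₁.1 hδ₁.2]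
    calc F n ≤ (1 - δ₁) * ((1 - δ₁)⁻¹ * C) := by
          rw [hFdef]
          exact mul_le_mul_of_nonneg_left (by rw [← h2]; exact h1) h1δ₁.le
      _ = C := by field_simp
  -- lower bound on every F n
  have hFL : ∀ n, (∑ i, γ i * v δ₁ (ξs i)) - ε ≤ F n := by
    intro n
    have hub := UB_iter hM hu0 hC hv HS hG0 hδ₁ hε' Hopt
    have hbound : ∀ T : ℕ, (∑ i, γ i * v δ₁ (ξs i)) ≤ F n + ε + δ₁ ^ T * C := by
      intro T
      have h1 := hub T n
      have hpart : (1 - δ₁) * (∑ t ∈ Finset.range T, δ₁ ^ t * c (n + t)) ≤ F n := by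
        rw [hFdef]
        refine mul_le_mul_of_nonneg_left ?_ h1δ₁.le
        exact Summable.sum_le_tsum _ (fun t _ => mul_nonneg (pow_nonneg hδ₁.1 t) (hc _).1) (hsc₁ n)
      have hgeo : (∑ t ∈ Finset.range T, δ₁ ^ t) ≤ (1 - δ₁)⁻¹ := by
        rw [← tsum_geometric_of_lt_one hδ₁.1 hδ₁.2]
        exact Summable.sum_le_tsum _ (fun t _ => pow_nonneg hδ₁.1 t) hgs₁
      have hεterm : ε * (1 - δ₁) * (∑ t ∈ Finset.range T, δ₁ ^ t) ≤ ε := by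
        calc ε * (1 - δ₁) * (∑ t ∈ Finset.range T, δ₁ ^ t)
            ≤ ε * (1 - δ₁) * (1 - δ₁)⁻¹ := by
              exact mul_le_mul_of_nonneg_left hgeo (by positivity)
          _ = ε := by field_simp
      have htail : δ₁ ^ T * E (iterM SA SZ M a₀ p₀ (n + T)).1
          (iterM SA SZ M a₀ p₀ (n + T)).2 (v δ₁) ≤ δ₁ ^ T * C :=
        mul_le_mul_of_nonneg_left (hEb δ₁ hδ₁ (n + T)).2 (pow_nonneg hδ₁.1 T)
      calc (∑ i, γ i * v δ₁ (ξs i))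
          ≤ E (iterM SA SZ M a₀ p₀ n).1 (iterM SA SZ M a₀ p₀ n).2 (v δ₁) := hW₁le n
        _ ≤ (1 - δ₁) * (∑ t ∈ Finset.range T, δ₁ ^ t * c (n + t))
              + ε * (1 - δ₁) * (∑ t ∈ Finset.range T, δ₁ ^ t)
              + δ₁ ^ T * E (iterM SA SZ M a₀ p₀ (n + T)).1
                  (iterM SA SZ M a₀ p₀ (n + T)).2 (v δ₁) := by
            have := h1
            linarith [this]
        _ ≤ F n + ε + δ₁ ^ T * C := by linarith [hpart, hεterm, htail]
    have htend : Filter.Tendsto (fun T => F n + ε + δ₁ ^ T * C) Filter.atTop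
        (nhds (F n + ε + 0 * C)) := by
      refine Filter.Tendsto.add tendsto_const_nhds ?_
      exact (tendsto_pow_atTop_nhds_zero_of_lt_one hδ₁.1 hδ₁.2).mul_const C
    have := ge_of_tendsto' htend (fun T => hbound T)
    rw [zero_mul, add_zero] at this
    linarith
  -- recursion for F
  have hFrec : ∀ n, F n = (1 - δ₁) * c n + δ₁ * F (n + 1) := by
    intro n
    have h1 : (∑' t, δ₁ ^ t * c (n + t))
        = c n + ∑' t, δ₁ ^ (t + 1) * c (n + (t + 1)) := by
      rw [Summable.tsum_eq_zero_add (hsc₁ n)]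
      simp
    have h2 : (∑' t, δ₁ ^ (t + 1) * c (n + (t + 1)))
        = δ₁ * ∑' t, δ₁ ^ t * c (n + 1 + t) := by
      rw [← tsum_mul_left]
      apply tsum_congr; intro t
      have : n + (t + 1) = n + 1 + t := by omega
      rw [this]; ring
    rw [hFdef]
    simp only []
    rw [h1, h2]
    ring
  -- upper bound for the δ₂-discounted sum
  have hPle : (1 - δ₂) * (∑' t, δ₂ ^ t * c t) ≤ ∑ i, γ i * v δ₂ (ξs i) := by
    have hlb := LB_iter hM hu0 hC hv HS hG0 hδ₂
    have hE0 : E (iterM SA SZ M a₀ p₀ 0).1 (iterM SA SZ M a₀ p₀ 0).2 (v δ₂)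
        = ∑ i, γ i * v δ₂ (ξs i) := pack_E γ ξs (v δ₂)
    have hbound : ∀ T, (1 - δ₂) * (∑ t ∈ Finset.range T, δ₂ ^ t * c t)
        ≤ ∑ i, γ i * v δ₂ (ξs i) := by
      intro T
      have h1 := hlb T 0
      simp only [Nat.zero_add] at h1
      rw [hE0] at h1
      have h2 : 0 ≤ δ₂ ^ T * E (iterM SA SZ M a₀ p₀ T).1 (iterM SA SZ M a₀ p₀ T).2 (v δ₂) :=
        mul_nonneg (pow_nonneg hδ₂.1 T) (hEb δ₂ hδ₂ T).1
      linarith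
    have htend : Filter.Tendsto
        (fun T => (1 - δ₂) * (∑ t ∈ Finset.range T, δ₂ ^ t * c t)) Filter.atTop
        (nhds ((1 - δ₂) * (∑' t, δ₂ ^ t * c t))) :=
      (hsc₂.hasSum.tendsto_sum_nat).const_mul _
    exact le_of_tendsto' htend hbound
  -- Abel summation comparison
  set L : ℝ := (∑ i, γ i * v δ₁ (ξs i)) - ε with hLdef
  have hsF : Summable (fun n => δ₂ ^ n * F n) :=
    Summable.of_nonneg_of_le (fun n => mul_nonneg (pow_nonneg hδ₂.1 n) (hF0 n))
      (fun n => mul_le_mul_of_nonneg_left (hFC n) (pow_nonneg hδ₂.1 n)) (hgs₂.mul_right C)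
  have hsF1 : Summable (fun n => δ₂ ^ n * F (n + 1)) :=
    Summable.of_nonneg_of_le (fun n => mul_nonneg (pow_nonneg hδ₂.1 n) (hF0 (n+1)))
      (fun n => mul_le_mul_of_nonneg_left (hFC (n+1)) (pow_nonneg hδ₂.1 n)) (hgs₂.mul_right C)
  set G : ℝ := ∑' n, δ₂ ^ n * F (n + 1) with hGdef
  have hkey : (1 - δ₁) * (∑' t, δ₂ ^ t * c t) = F 0 + (δ₂ - δ₁) * G := by
    have h1 : ∀ n : ℕ, (1 - δ₁) * (δ₂ ^ n * c n) = δ₂ ^ n * F n - δ₁ * (δ₂ ^ n * F (n + 1)) := by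
      intro n
      rw [hFrec n]
      ring
    calc (1 - δ₁) * (∑' t, δ₂ ^ t * c t) = ∑' t, (1 - δ₁) * (δ₂ ^ t * c t) := by
          rw [tsum_mul_left]
      _ = ∑' t, (δ₂ ^ t * F t - δ₁ * (δ₂ ^ t * F (t + 1))) := tsum_congr h1
      _ = (∑' t, δ₂ ^ t * F t) - δ₁ * G := by
          rw [Summable.tsum_sub hsF (hsF1.mul_left δ₁), tsum_mul_left, hGdef]
      _ = F 0 + δ₂ * G - δ₁ * G := by
          have h2 : (∑' t, δ₂ ^ t * F t) = F 0 + δ₂ * G := by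
            rw [Summable.tsum_eq_zero_add hsF]
            simp only [pow_zero, one_mul]
            congr 1
            rw [hGdef, ← tsum_mul_left]
            apply tsum_congr; intro t; ring
          rw [h2]
      _ = F 0 + (δ₂ - δ₁) * G := by ring
  have hGL : L * (1 - δ₂)⁻¹ ≤ G := by
    have h1 : ∀ n : ℕ, δ₂ ^ n * L ≤ δ₂ ^ n * F (n + 1) := fun n =>
      mul_le_mul_of_nonneg_left (hFL (n + 1)) (pow_nonneg hδ₂.1 n)
    have h2 : (∑' n : ℕ, δ₂ ^ n * L) ≤ G :=
      Summable.tsum_le_tsum h1 (hgs₂.mul_right L) hsF1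
    rw [tsum_mul_right, tsum_geometric_of_lt_one hδ₂.1 hδ₂.2] at h2
    linarith [h2]
  -- combine
  have hF0L : L ≤ F 0 := hFL 0
  have hδ₂δ₁ : 0 ≤ δ₂ - δ₁ := by linarith
  have hcomb : (1 - δ₁) * L ≤ (1 - δ₁) * ((1 - δ₂) * (∑' t, δ₂ ^ t * c t)) := by
    have hG2 : (δ₂ - δ₁) * (L * (1 - δ₂)⁻¹) ≤ (δ₂ - δ₁) * G :=
      mul_le_mul_of_nonneg_left hGL hδ₂δ₁
    have h3 : (1 - δ₂) * (F 0 + (δ₂ - δ₁) * G) = (1 - δ₂) * ((1 - δ₁) * (∑' t, δ₂ ^ t * c t)) := by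
      rw [hkey]
    have h4 : (1 - δ₂) * (F 0 + (δ₂ - δ₁) * (L * (1 - δ₂)⁻¹))
        ≤ (1 - δ₂) * (F 0 + (δ₂ - δ₁) * G) :=
      mul_le_mul_of_nonneg_left (by linarith [hG2]) h1δ₂.le
    have h5 : (1 - δ₂) * (F 0 + (δ₂ - δ₁) * (L * (1 - δ₂)⁻¹))
        = (1 - δ₂) * F 0 + (δ₂ - δ₁) * L := by
      field_simp
    have h6 : (1 - δ₁) * L ≤ (1 - δ₂) * F 0 + (δ₂ - δ₁) * L := by
      have := mul_le_mul_of_nonneg_left hF0L h1δ₂.le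
      nlinarith [this]
    calc (1 - δ₁) * L ≤ (1 - δ₂) * F 0 + (δ₂ - δ₁) * L := h6
      _ = (1 - δ₂) * (F 0 + (δ₂ - δ₁) * (L * (1 - δ₂)⁻¹)) := h5.symm
      _ ≤ (1 - δ₂) * (F 0 + (δ₂ - δ₁) * G) := h4
      _ = (1 - δ₂) * ((1 - δ₁) * (∑' t, δ₂ ^ t * c t)) := h3
      _ = (1 - δ₁) * ((1 - δ₂) * (∑' t, δ₂ ^ t * c t)) := by ring
  have hLP : L ≤ (1 - δ₂) * (∑' t, δ₂ ^ t * c t) :=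
    le_of_mul_le_mul_left (by linarith [hcomb]) h1δ₁
  rw [hLdef] at hLP
  linarith [hPle, hLP]
end
end

section
/- Assume M is irreducible with unique invariant distribution π_M. Define Φ(δ) := v_δ(π_M) and Ψ(δ) := Σ_{ℓ∈K} π_M^ℓ · v_δ(e_ℓ), where e_ℓ ∈ Δ(K) is the Dirac belief on state ℓ. If there exists δ₀ ∈ [0,1) with Φ(δ₀) = Ψ(δ₀), then Φ(δ) = Ψ(δ) = Φ(δ₀) for every δ ∈ [δ₀, 1). -/
open scoped BigOperators

noncomputable section

set_option linter.unusedSectionVars false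

namespace MP

open Matrix

lemma summable_of_tsum_one {α : ℕ → ℝ} (h : (∑' s, α s) = 1) : Summable α := by
  by_contra hs
  rw [tsum_eq_zero_of_not_summable hs] at h; norm_num at h

lemma summable_mul {α g : ℕ → ℝ} {c : ℝ} (hα : ∀ s, 0 ≤ α s) (hs : Summable α)
    (hg0 : ∀ s, 0 ≤ g s) (hgc : ∀ s, g s ≤ c) : Summable fun s => α s * g s :=
  Summable.of_nonneg_of_le (fun s => mul_nonneg (hα s) (hg0 s))
    (fun s => mul_le_mul_of_nonneg_left (hgc s) (hα s)) (hs.mul_right c)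

lemma tsum_mul_le {α g : ℕ → ℝ} {c : ℝ} (hα : ∀ s, 0 ≤ α s) (hs : Summable α)
    (h1 : (∑' s, α s) = 1) (hg0 : ∀ s, 0 ≤ g s) (hgc : ∀ s, g s ≤ c) :
    ∑' s, α s * g s ≤ c := by
  calc ∑' s, α s * g s ≤ ∑' s, α s * c :=
        Summable.tsum_le_tsum (fun s => mul_le_mul_of_nonneg_left (hgc s) (hα s))
          (summable_mul hα hs hg0 hgc) (hs.mul_right c)
  _ = c := by rw [tsum_mul_right, h1, one_mul]

lemma interleave_tsum {a b : ℕ → ℝ} (ha : Summable a) (hb : Summable b) :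
    (∑' n : ℕ, if n % 2 = 0 then a (n / 2) else b (n / 2)) = (∑' s, a s) + (∑' s, b s) := by
  have he : ∀ k : ℕ, (if (2 * k) % 2 = 0 then a ((2 * k) / 2) else b ((2 * k) / 2)) = a k := by
    intro k
    have h1 : (2 * k) % 2 = 0 := by omega
    have h2 : (2 * k) / 2 = k := by omega
    rw [if_pos h1, h2]
  have ho : ∀ k : ℕ, (if (2 * k + 1) % 2 = 0 then a ((2 * k + 1) / 2) else b ((2 * k + 1) / 2)) = b k := by
    intro k
    have h1 : (2 * k + 1) % 2 = 1 := by omega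
    have h2 : (2 * k + 1) / 2 = k := by omega
    rw [h2, if_neg (by omega)]
  rw [← tsum_even_add_odd (f := fun n => if n % 2 = 0 then a (n / 2) else b (n / 2))]
  · rw [tsum_congr he, tsum_congr ho]
  · exact (summable_congr he).mpr ha
  · exact (summable_congr ho).mpr hb

variable {K : Type*} [Fintype K] [Nonempty K] [DecidableEq K]

/-- Dirac belief on state ℓ. -/
def dir (ℓ : K) : K → ℝ := fun m => if m = ℓ then 1 else 0

lemma dir_mem (ℓ : K) : dir ℓ ∈ stdSimplex ℝ K := by
  constructor
  · intro m; unfold dir; split <;> norm_num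
  · simp [dir]

lemma vecMul_apply (x : K → ℝ) (M : Matrix K K ℝ) (j : K) :
    vecMul x M j = ∑ i, x i * M i j := by
  simp [vecMul, dotProduct]

lemma dir_vecMul (M : Matrix K K ℝ) (ℓ : K) : vecMul (dir ℓ) M = fun m => M ℓ m := by
  funext m; rw [vecMul_apply]; simp [dir, ite_mul]

lemma vecMul_mem_s2 {M : Matrix K K ℝ} (hM : IsStochastic M) {ξ : K → ℝ}
    (hξ : ξ ∈ stdSimplex ℝ K) : vecMul ξ M ∈ stdSimplex ℝ K := by
  constructor
  · intro j; rw [vecMul_apply]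
    exact Finset.sum_nonneg fun i _ => mul_nonneg (hξ.1 i) (hM.1 i j)
  · have : ∑ j, vecMul ξ M j = ∑ i, ξ i * ∑ j, M i j := by
      simp only [vecMul_apply, Finset.mul_sum]
      rw [Finset.sum_comm]
    rw [this]
    have : ∑ i, ξ i * ∑ j, M i j = ∑ i, ξ i := by
      apply Finset.sum_congr rfl; intro i _; rw [hM.2 i, mul_one]
    rw [this, hξ.2]

lemma comp_le_one {ξ : K → ℝ} (hξ : ξ ∈ stdSimplex ℝ K) (m : K) : ξ m ≤ 1 := by
  rw [← hξ.2]
  exact Finset.single_le_sum (fun i _ => hξ.1 i) (Finset.mem_univ m)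

lemma fin_tsum (f : K → ℝ) :
    (∑' n : ℕ, if h : n < Fintype.card K then f ((Fintype.equivFin K).symm ⟨n, h⟩) else 0)
      = ∑ ℓ, f ℓ := by
  rw [tsum_eq_sum (s := Finset.range (Fintype.card K))
    (fun b hb => dif_neg (by simpa using hb))]
  rw [← Fin.sum_univ_eq_sum_range
    (fun n => if h : n < Fintype.card K then f ((Fintype.equivFin K).symm ⟨n, h⟩) else 0)]
  have h : ∀ i : Fin (Fintype.card K),
      (if h : (i : ℕ) < Fintype.card K then f ((Fintype.equivFin K).symm ⟨(i : ℕ), h⟩) else 0)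
        = f ((Fintype.equivFin K).symm i) := by
    intro i; rw [dif_pos i.isLt]
  rw [Finset.sum_congr rfl (fun i _ => h i)]
  exact Equiv.sum_comp (Fintype.equivFin K).symm f

lemma isSplit_trivial {ξ : K → ℝ} (hξ : ξ ∈ stdSimplex ℝ K) :
    IsSplit ξ (fun s => if s = 0 then 1 else 0) fun _ => ξ := by
  refine ⟨fun s => by dsimp only; split <;> norm_num, fun _ => hξ, by rw [tsum_ite_eq], fun ℓ => ?_⟩
  have h : (fun s : ℕ => (if s = 0 then (1 : ℝ) else 0) * ξ ℓ)
      = fun s => if s = 0 then ξ ℓ else 0 := by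
    funext s; split <;> simp
  rw [h, tsum_ite_eq]

lemma payoff_trivial (M : Matrix K K ℝ) (u : (K → ℝ) → ℝ) (δ : ℝ) (w : (K → ℝ) → ℝ)
    (ξ : K → ℝ) :
    splitPayoff M u δ w (fun s => if s = 0 then 1 else 0) (fun _ => ξ)
      = (1 - δ) * u ξ + δ * w (vecMul ξ M) := by
  unfold splitPayoff
  have h : (fun s : ℕ => (if s = 0 then (1 : ℝ) else 0) * ((1 - δ) * u ξ + δ * w (vecMul ξ M)))
      = fun s => if s = 0 then (1 - δ) * u ξ + δ * w (vecMul ξ M) else 0 := by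
    funext s; split <;> simp
  rw [h, tsum_ite_eq]

/-- weights for the Dirac split -/
def dw (ξ : K → ℝ) : ℕ → ℝ :=
  fun n => if h : n < Fintype.card K then ξ ((Fintype.equivFin K).symm ⟨n, h⟩) else 0

/-- beliefs of the Dirac split -/
def db : ℕ → K → ℝ :=
  fun n => if h : n < Fintype.card K then dir ((Fintype.equivFin K).symm ⟨n, h⟩)
    else dir (Classical.arbitrary K)

lemma isSplit_dirac {ξ : K → ℝ} (hξ : ξ ∈ stdSimplex ℝ K) : IsSplit ξ (dw ξ) db := by
  refine ⟨?_, ?_, ?_, ?_⟩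
  · intro s; unfold dw; split
    · exact hξ.1 _
    · exact le_refl 0
  · intro s; unfold db; split <;> exact dir_mem _
  · exact (fin_tsum ξ).trans hξ.2
  · intro ℓ
    have h1 : (fun s => dw ξ s * db s ℓ)
        = fun n => if h : n < Fintype.card K then
            (fun j => ξ j * dir j ℓ) ((Fintype.equivFin K).symm ⟨n, h⟩) else 0 := by
      funext n; unfold dw db; split <;> simp
    rw [h1]
    exact (fin_tsum (fun j => ξ j * dir j ℓ)).trans (by simp [dir, mul_ite])

lemma payoff_dirac (M : Matrix K K ℝ) (u : (K → ℝ) → ℝ) (δ : ℝ) (w : (K → ℝ) → ℝ)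
    (ξ : K → ℝ) :
    splitPayoff M u δ w (dw ξ) db
      = ∑ ℓ, ξ ℓ * ((1 - δ) * u (dir ℓ) + δ * w (vecMul (dir ℓ) M)) := by
  unfold splitPayoff
  have h1 : (fun s => dw ξ s * ((1 - δ) * u (db s) + δ * w (vecMul (db s) M)))
      = fun n => if h : n < Fintype.card K then
          (fun j => ξ j * ((1 - δ) * u (dir j) + δ * w (vecMul (dir j) M)))
            ((Fintype.equivFin K).symm ⟨n, h⟩) else 0 := by
    funext n; unfold dw db; split <;> simp
  rw [h1]
  exact fin_tsum (fun j => ξ j * ((1 - δ) * u (dir j) + δ * w (vecMul (dir j) M)))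

lemma sum_vecMul_mul (M : Matrix K K ℝ) (ζ x : K → ℝ) :
    ∑ ℓ, vecMul ζ M ℓ * x ℓ = ∑ m, ζ m * ∑ ℓ, M m ℓ * x ℓ := by
  simp only [vecMul_apply, Finset.sum_mul, Finset.mul_sum]
  rw [Finset.sum_comm]
  apply Finset.sum_congr rfl; intro m _
  apply Finset.sum_congr rfl; intro ℓ _
  ring

lemma tsum_split_linear {α : ℕ → ℝ} {ξs : ℕ → K → ℝ} {ξ : K → ℝ}
    (hs : IsSplit ξ α ξs) (y : K → ℝ) :
    (∑' s, α s * ∑ ℓ, ξs s ℓ * y ℓ) = ∑ ℓ, ξ ℓ * y ℓ := by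
  obtain ⟨hα0, hξs, hα1, hcomp⟩ := hs
  have hαs := summable_of_tsum_one hα1
  have h1 : (fun s => α s * ∑ ℓ, ξs s ℓ * y ℓ) = fun s => ∑ ℓ, (α s * ξs s ℓ) * y ℓ := by
    funext s; rw [Finset.mul_sum]; apply Finset.sum_congr rfl; intro ℓ _; ring
  rw [h1, Summable.tsum_finsetSum (fun ℓ _ =>
    (summable_mul hα0 hαs (fun s => (hξs s).1 ℓ) (fun s => comp_le_one (hξs s) ℓ)).mul_right (y ℓ))]
  apply Finset.sum_congr rfl; intro ℓ _
  rw [tsum_mul_right, hcomp ℓ]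

section Value

variable {M : Matrix K K ℝ} {u : (K → ℝ) → ℝ} {C : ℝ} {v : ℝ → (K → ℝ) → ℝ} {δ : ℝ}

lemma uC (hC : IsLUB (u '' stdSimplex ℝ K) C) : ∀ ξ ∈ stdSimplex ℝ K, u ξ ≤ C :=
  fun ξ hξ => hC.1 ⟨ξ, hξ, rfl⟩

lemma term_bounds (hM : IsStochastic M) (hu0 : ∀ ξ ∈ stdSimplex ℝ K, 0 ≤ u ξ)
    (hC : IsLUB (u '' stdSimplex ℝ K) C) (hv : IsValueFamily M u C v)
    (hδ : δ ∈ Set.Ico (0:ℝ) 1) {ξ : K → ℝ} (hξ : ξ ∈ stdSimplex ℝ K) :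
    0 ≤ (1 - δ) * u ξ + δ * v δ (vecMul ξ M) ∧
      (1 - δ) * u ξ + δ * v δ (vecMul ξ M) ≤ C := by
  have h1 := hu0 ξ hξ
  have h2 := uC hC ξ hξ
  have h3 := (hv δ hδ).1 _ (vecMul_mem_s2 hM hξ)
  have hd0 := hδ.1
  have hd1 := hδ.2
  constructor
  · have e1 : 0 ≤ (1 - δ) * u ξ := mul_nonneg (by linarith) h1
    have e2 : 0 ≤ δ * v δ (vecMul ξ M) := mul_nonneg hd0 h3.1
    linarith
  · have e1 : (1 - δ) * u ξ ≤ (1 - δ) * C := mul_le_mul_of_nonneg_left h2 (by linarith)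
    have e2 : δ * v δ (vecMul ξ M) ≤ δ * C := mul_le_mul_of_nonneg_left h3.2 hd0
    linarith

lemma payoff_le_C (hM : IsStochastic M) (hu0 : ∀ ξ ∈ stdSimplex ℝ K, 0 ≤ u ξ)
    (hC : IsLUB (u '' stdSimplex ℝ K) C) (hv : IsValueFamily M u C v)
    (hδ : δ ∈ Set.Ico (0:ℝ) 1) {ξ : K → ℝ} {α : ℕ → ℝ} {ξs : ℕ → K → ℝ}
    (hs : IsSplit ξ α ξs) : splitPayoff M u δ (v δ) α ξs ≤ C := by
  obtain ⟨hα0, hξs, hα1, hcomp⟩ := hs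
  exact tsum_mul_le hα0 (summable_of_tsum_one hα1) hα1
    (fun s => (term_bounds hM hu0 hC hv hδ (hξs s)).1)
    (fun s => (term_bounds hM hu0 hC hv hδ (hξs s)).2)

lemma value_ge (hM : IsStochastic M) (hu0 : ∀ ξ ∈ stdSimplex ℝ K, 0 ≤ u ξ)
    (hC : IsLUB (u '' stdSimplex ℝ K) C) (hv : IsValueFamily M u C v)
    (hδ : δ ∈ Set.Ico (0:ℝ) 1) {ξ : K → ℝ} (hξ : ξ ∈ stdSimplex ℝ K)
    {α : ℕ → ℝ} {ξs : ℕ → K → ℝ} (hs : IsSplit ξ α ξs) :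
    splitPayoff M u δ (v δ) α ξs ≤ v δ ξ := by
  rw [(hv δ hδ).2 ξ hξ]
  apply le_csSup
  · refine ⟨C, ?_⟩
    rintro r ⟨α', ξs', hs', rfl⟩
    exact payoff_le_C hM hu0 hC hv hδ hs'
  · exact ⟨α, ξs, hs, rfl⟩

lemma value_le (hv : IsValueFamily M u C v) (hδ : δ ∈ Set.Ico (0:ℝ) 1)
    {ξ : K → ℝ} (hξ : ξ ∈ stdSimplex ℝ K) {c : ℝ}
    (h : ∀ α ξs, IsSplit ξ α ξs → splitPayoff M u δ (v δ) α ξs ≤ c) : v δ ξ ≤ c := by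
  rw [(hv δ hδ).2 ξ hξ]
  have hne : Set.Nonempty {r : ℝ | ∃ α ξs, IsSplit ξ α ξs ∧ r = splitPayoff M u δ (v δ) α ξs} :=
    ⟨_, ⟨_, _, isSplit_trivial hξ, rfl⟩⟩
  apply csSup_le hne
  rintro r ⟨α', ξs', hs', rfl⟩
  exact h _ _ hs'

lemma dirac_value (hM : IsStochastic M) (hu0 : ∀ ξ ∈ stdSimplex ℝ K, 0 ≤ u ξ)
    (hC : IsLUB (u '' stdSimplex ℝ K) C) (hv : IsValueFamily M u C v)
    (hδ : δ ∈ Set.Ico (0:ℝ) 1) (ℓ : K) :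
    v δ (dir ℓ) = (1 - δ) * u (dir ℓ) + δ * v δ (vecMul (dir ℓ) M) := by
  have hmem := dir_mem (K := K) ℓ
  refine le_antisymm (value_le hv hδ hmem ?_) ?_
  · intro α ξs hs
    obtain ⟨hα0, hξs, hα1, hcomp⟩ := hs
    have hαs := summable_of_tsum_one hα1
    have hfix : ∀ s, α s ≠ 0 → ξs s = dir ℓ := by
      intro s hsne
      have hz : ∀ m, m ≠ ℓ → ξs s m = 0 := by
        intro m hm
        have h0 : (∑' s', α s' * ξs s' m) = 0 := by
          rw [hcomp m]; simp [dir, hm]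
        have hsumm : Summable fun s' => α s' * ξs s' m :=
          summable_mul hα0 hαs (fun s' => (hξs s').1 m) (fun s' => comp_le_one (hξs s') m)
        have hterm : α s * ξs s m ≤ 0 := by
          rw [← h0]
          exact Summable.le_tsum hsumm s (fun j _ => mul_nonneg (hα0 j) ((hξs j).1 m))
        have hzz : α s * ξs s m = 0 :=
          le_antisymm hterm (mul_nonneg (hα0 s) ((hξs s).1 m))
        rcases mul_eq_zero.mp hzz with h | h
        · exact absurd h hsne
        · exact h
      funext m
      by_cases hm : m = ℓ
      · have hs1 : ξs s ℓ = 1 := by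
          have h2 := (hξs s).2
          rw [Finset.sum_eq_single ℓ (fun b _ hb => hz b hb)
            (fun h => absurd (Finset.mem_univ ℓ) h)] at h2
          exact h2
        rw [hm, hs1]; simp [dir]
      · rw [hz m hm]; simp [dir, hm]
    have hcong : ∀ s, α s * ((1 - δ) * u (ξs s) + δ * v δ (vecMul (ξs s) M))
        = α s * ((1 - δ) * u (dir ℓ) + δ * v δ (vecMul (dir ℓ) M)) := by
      intro s
      rcases eq_or_ne (α s) 0 with h | h
      · rw [h, zero_mul, zero_mul]
      · rw [hfix s h]
    have heq : splitPayoff M u δ (v δ) α ξs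
        = (1 - δ) * u (dir ℓ) + δ * v δ (vecMul (dir ℓ) M) :=
      (tsum_congr hcong).trans (by rw [tsum_mul_right, hα1, one_mul])
    exact le_of_eq heq
  · have h := value_ge hM hu0 hC hv hδ hmem (isSplit_trivial hmem)
    rwa [payoff_trivial] at h

lemma value_ge_dirac (hM : IsStochastic M) (hu0 : ∀ ξ ∈ stdSimplex ℝ K, 0 ≤ u ξ)
    (hC : IsLUB (u '' stdSimplex ℝ K) C) (hv : IsValueFamily M u C v)
    (hδ : δ ∈ Set.Ico (0:ℝ) 1) {ξ : K → ℝ} (hξ : ξ ∈ stdSimplex ℝ K) :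
    ∑ ℓ, ξ ℓ * v δ (dir ℓ) ≤ v δ ξ := by
  have h := value_ge hM hu0 hC hv hδ hξ (isSplit_dirac hξ)
  rw [payoff_dirac] at h
  calc ∑ ℓ, ξ ℓ * v δ (dir ℓ)
      = ∑ ℓ, ξ ℓ * ((1 - δ) * u (dir ℓ) + δ * v δ (vecMul (dir ℓ) M)) :=
        Finset.sum_congr rfl fun ℓ _ => by rw [← dirac_value hM hu0 hC hv hδ ℓ]
    _ ≤ v δ ξ := h

lemma concave_s2 (hM : IsStochastic M) (hu0 : ∀ ξ ∈ stdSimplex ℝ K, 0 ≤ u ξ)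
    (hC : IsLUB (u '' stdSimplex ℝ K) C) (hv : IsValueFamily M u C v)
    (hδ : δ ∈ Set.Ico (0:ℝ) 1) {ξ η : K → ℝ} (hξ : ξ ∈ stdSimplex ℝ K)
    (hη : η ∈ stdSimplex ℝ K) {t : ℝ} (ht0 : 0 ≤ t) (ht1 : t ≤ 1) :
    t * v δ ξ + (1 - t) * v δ η ≤ v δ (fun ℓ => t * ξ ℓ + (1 - t) * η ℓ) := by
  have hζ : (fun ℓ => t * ξ ℓ + (1 - t) * η ℓ) ∈ stdSimplex ℝ K := by
    constructor
    · intro m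
      have := mul_nonneg ht0 (hξ.1 m)
      have := mul_nonneg (by linarith : (0:ℝ) ≤ 1 - t) (hη.1 m)
      dsimp only; linarith
    · simp only [Finset.sum_add_distrib, ← Finset.mul_sum, hξ.2, hη.2]; ring
  apply le_of_forall_pos_le_add
  intro ε hε
  have hSξ := (hv δ hδ).2 ξ hξ
  have hSη := (hv δ hδ).2 η hη
  obtain ⟨r1, hr1mem, hr1⟩ := exists_lt_of_lt_csSup
    (⟨_, ⟨_, _, isSplit_trivial hξ, rfl⟩⟩ :
      Set.Nonempty {r : ℝ | ∃ α ξs, IsSplit ξ α ξs ∧ r = splitPayoff M u δ (v δ) α ξs})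
    (by rw [← hSξ]; linarith : v δ ξ - ε < sSup _)
  obtain ⟨r2, hr2mem, hr2⟩ := exists_lt_of_lt_csSup
    (⟨_, ⟨_, _, isSplit_trivial hη, rfl⟩⟩ :
      Set.Nonempty {r : ℝ | ∃ α ξs, IsSplit η α ξs ∧ r = splitPayoff M u δ (v δ) α ξs})
    (by rw [← hSη]; linarith : v δ η - ε < sSup _)
  obtain ⟨α, ξs, hsα, hr1eq⟩ := hr1mem
  obtain ⟨β, ηs, hsβ, hr2eq⟩ := hr2mem
  obtain ⟨hα0, hξs, hα1, hcompξ⟩ := hsα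
  obtain ⟨hβ0, hηs, hβ1, hcompη⟩ := hsβ
  have hαs := summable_of_tsum_one hα1
  have hβs := summable_of_tsum_one hβ1
  have hsplit : IsSplit (fun ℓ => t * ξ ℓ + (1 - t) * η ℓ)
      (fun n => if n % 2 = 0 then t * α (n / 2) else (1 - t) * β (n / 2))
      (fun n => if n % 2 = 0 then ξs (n / 2) else ηs (n / 2)) := by
    refine ⟨?_, ?_, ?_, ?_⟩
    · intro s; dsimp only; split
      · exact mul_nonneg ht0 (hα0 _)
      · exact mul_nonneg (by linarith) (hβ0 _)
    · intro s; dsimp only; split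
      · exact hξs _
      · exact hηs _
    · calc (∑' n, if n % 2 = 0 then t * α (n / 2) else (1 - t) * β (n / 2))
          = (∑' s, t * α s) + (∑' s, (1 - t) * β s) :=
            interleave_tsum (hαs.mul_left t) (hβs.mul_left (1 - t))
        _ = 1 := by rw [tsum_mul_left, tsum_mul_left, hα1, hβ1]; ring
    · intro ℓ
      have hfun : (fun n => (if n % 2 = 0 then t * α (n / 2) else (1 - t) * β (n / 2)) *
            (if n % 2 = 0 then ξs (n / 2) else ηs (n / 2)) ℓ)
          = fun n => if n % 2 = 0 then t * (α (n / 2) * ξs (n / 2) ℓ)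
              else (1 - t) * (β (n / 2) * ηs (n / 2) ℓ) := by
        funext n; by_cases hn : n % 2 = 0 <;> simp only [hn, if_true, if_false] <;> ring
      rw [hfun]
      have h1 : Summable fun s => t * (α s * ξs s ℓ) :=
        (summable_mul hα0 hαs (fun s => (hξs s).1 ℓ) (fun s => comp_le_one (hξs s) ℓ)).mul_left t
      have h2 : Summable fun s => (1 - t) * (β s * ηs s ℓ) :=
        (summable_mul hβ0 hβs (fun s => (hηs s).1 ℓ) (fun s => comp_le_one (hηs s) ℓ)).mul_left (1 - t)
      calc (∑' n, if n % 2 = 0 then t * (α (n / 2) * ξs (n / 2) ℓ)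
              else (1 - t) * (β (n / 2) * ηs (n / 2) ℓ))
          = (∑' s, t * (α s * ξs s ℓ)) + ∑' s, (1 - t) * (β s * ηs s ℓ) :=
            interleave_tsum h1 h2
        _ = t * ξ ℓ + (1 - t) * η ℓ := by
            rw [tsum_mul_left, tsum_mul_left, hcompξ ℓ, hcompη ℓ]
  have hpay : splitPayoff M u δ (v δ)
      (fun n => if n % 2 = 0 then t * α (n / 2) else (1 - t) * β (n / 2))
      (fun n => if n % 2 = 0 then ξs (n / 2) else ηs (n / 2))
      = t * splitPayoff M u δ (v δ) α ξs + (1 - t) * splitPayoff M u δ (v δ) β ηs := by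
    unfold splitPayoff
    have hfun : (fun n => (if n % 2 = 0 then t * α (n / 2) else (1 - t) * β (n / 2)) *
          ((1 - δ) * u ((if n % 2 = 0 then ξs (n / 2) else ηs (n / 2)) : K → ℝ) +
            δ * v δ (vecMul ((if n % 2 = 0 then ξs (n / 2) else ηs (n / 2)) : K → ℝ) M)))
        = fun n => if n % 2 = 0 then
            t * (α (n / 2) * ((1 - δ) * u (ξs (n / 2)) + δ * v δ (vecMul (ξs (n / 2)) M)))
          else (1 - t) * (β (n / 2) * ((1 - δ) * u (ηs (n / 2)) + δ * v δ (vecMul (ηs (n / 2)) M))) := by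
      funext n; by_cases hn : n % 2 = 0 <;> simp only [hn, if_true, if_false] <;> ring
    rw [hfun]
    have h1 : Summable fun s => t * (α s * ((1 - δ) * u (ξs s) + δ * v δ (vecMul (ξs s) M))) :=
      (summable_mul hα0 hαs (fun s => (term_bounds hM hu0 hC hv hδ (hξs s)).1)
        (fun s => (term_bounds hM hu0 hC hv hδ (hξs s)).2)).mul_left t
    have h2 : Summable fun s => (1 - t) * (β s * ((1 - δ) * u (ηs s) + δ * v δ (vecMul (ηs s) M))) :=
      (summable_mul hβ0 hβs (fun s => (term_bounds hM hu0 hC hv hδ (hηs s)).1)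
        (fun s => (term_bounds hM hu0 hC hv hδ (hηs s)).2)).mul_left (1 - t)
    rw [interleave_tsum h1 h2, tsum_mul_left, tsum_mul_left]
  have hge := value_ge hM hu0 hC hv hδ hζ hsplit
  rw [hpay, ← hr1eq, ← hr2eq] at hge
  have e1 : t * (v δ ξ - ε) ≤ t * r1 := mul_le_mul_of_nonneg_left hr1.le ht0
  have e2 : (1 - t) * (v δ η - ε) ≤ (1 - t) * r2 :=
    mul_le_mul_of_nonneg_left hr2.le (by linarith)
  nlinarith

end Value

end MP

theorem markovian_persuasion_Phi_eq_Psi_propagates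
    {K : Type*} [Fintype K] [Nonempty K] [DecidableEq K]
    (M : Matrix K K ℝ) (hM : IsStochastic M)
    (hirr : ∀ ℓ ℓ' : K, ∃ n : ℕ, 1 ≤ n ∧ 0 < (M ^ n) ℓ ℓ')
    (u : (K → ℝ) → ℝ) (hu0 : ∀ ξ ∈ stdSimplex ℝ K, 0 ≤ u ξ)
    (husc : UpperSemicontinuousOn u (stdSimplex ℝ K))
    (C : ℝ) (hC : IsLUB (u '' stdSimplex ℝ K) C)
    (v : ℝ → (K → ℝ) → ℝ) (hv : IsValueFamily M u C v)
    (πM : K → ℝ) (hπ : πM ∈ stdSimplex ℝ K) (hπinv : Matrix.vecMul πM M = πM)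
    (hπuniq : ∀ π' ∈ stdSimplex ℝ K, Matrix.vecMul π' M = π' → π' = πM)
    (Φ Ψ : ℝ → ℝ)
    (hΦ : ∀ δ, Φ δ = v δ πM)
    (hΨ : ∀ δ, Ψ δ = ∑ ℓ, πM ℓ * v δ (fun m => if m = ℓ then (1 : ℝ) else 0)) :
    ∀ δ₀ : ℝ, 0 ≤ δ₀ → δ₀ < 1 → Φ δ₀ = Ψ δ₀ →
      ∀ δ : ℝ, δ₀ ≤ δ → δ < 1 → Φ δ = Φ δ₀ ∧ Ψ δ = Φ δ₀ := by
  intro δ₀ hδ₀0 hδ₀1 heq δ hδδ hδ1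
  have hδ₀ : δ₀ ∈ Set.Ico (0:ℝ) 1 := ⟨hδ₀0, hδ₀1⟩
  have hδm : δ ∈ Set.Ico (0:ℝ) 1 := ⟨le_trans hδ₀0 hδδ, hδ1⟩
  have hΨ' : ∀ d : ℝ, Ψ d = ∑ ℓ, πM ℓ * v d (MP.dir ℓ) := fun d => hΨ d
  -- positivity of the invariant distribution
  have hMpow : ∀ n : ℕ, ∀ i j : K, 0 ≤ (M ^ n) i j := by
    intro n
    induction n with
    | zero => intro i j; rw [pow_zero]; by_cases h : i = j <;> simp [Matrix.one_apply, h]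
    | succ n ih =>
        intro i j
        rw [pow_succ, Matrix.mul_apply]
        exact Finset.sum_nonneg fun l _ => mul_nonneg (ih i l) (hM.1 l j)
  have hπpow : ∀ n : ℕ, Matrix.vecMul πM (M ^ n) = πM := by
    intro n
    induction n with
    | zero => rw [pow_zero, Matrix.vecMul_one]
    | succ n ih => rw [pow_succ, ← Matrix.vecMul_vecMul, ih, hπinv]
  have hπpos : ∀ ℓ, 0 < πM ℓ := by
    intro ℓ
    obtain ⟨ℓ', hℓ'⟩ : ∃ ℓ', 0 < πM ℓ' := by
      by_contra h
      push_neg at h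
      have h0 : ∑ m, πM m = 0 :=
        Finset.sum_eq_zero fun m _ => le_antisymm (h m) (hπ.1 m)
      rw [hπ.2] at h0; norm_num at h0
    obtain ⟨n, _, hn⟩ := hirr ℓ' ℓ
    have hrew : πM ℓ = ∑ j, πM j * (M ^ n) j ℓ := by
      conv_lhs => rw [← hπpow n]
      rw [MP.vecMul_apply]
    rw [hrew]
    calc (0:ℝ) < πM ℓ' * (M ^ n) ℓ' ℓ := mul_pos hℓ' hn
      _ ≤ ∑ j, πM j * (M ^ n) j ℓ :=
          Finset.single_le_sum (fun j _ => mul_nonneg (hπ.1 j) (hMpow n j ℓ)) (Finset.mem_univ ℓ')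
  -- Part 1 : the value at δ₀ is linear on the simplex
  set c : K → ℝ := fun ℓ => v δ₀ (MP.dir ℓ) with hcdef
  have hL : ∀ ξ ∈ stdSimplex ℝ K, (∑ ℓ, ξ ℓ * c ℓ) ≤ v δ₀ ξ :=
    fun ξ hξ => MP.value_ge_dirac hM hu0 hC hv hδ₀ hξ
  have hπL : v δ₀ πM = ∑ ℓ, πM ℓ * c ℓ := (hΦ δ₀).symm.trans (heq.trans (hΨ' δ₀))
  have hlin : ∀ ξ ∈ stdSimplex ℝ K, v δ₀ ξ = ∑ ℓ, ξ ℓ * c ℓ := by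
    intro ξ hξ
    refine le_antisymm ?_ (hL ξ hξ)
    set tm : ℝ := Finset.univ.inf' Finset.univ_nonempty πM with htm
    have htm0 : 0 < tm := by
      rw [htm, Finset.lt_inf'_iff]
      exact fun i _ => hπpos i
    have htmle : ∀ ℓ, tm ≤ πM ℓ := fun ℓ => Finset.inf'_le _ (Finset.mem_univ ℓ)
    have htm1 : tm ≤ 1 := le_trans (htmle (Classical.arbitrary K)) (MP.comp_le_one hπ _)
    set t : ℝ := tm / 2 with htdef
    have ht0 : 0 < t := by rw [htdef]; linarith
    have ht1 : t < 1 := by rw [htdef]; linarith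
    set η : K → ℝ := fun ℓ => (πM ℓ - t * ξ ℓ) / (1 - t) with hηd
    have hη : η ∈ stdSimplex ℝ K := by
      constructor
      · intro m
        apply div_nonneg _ (by linarith)
        have hc1 := MP.comp_le_one hξ m
        have hc0 := hξ.1 m
        have h1 : t * ξ m ≤ t * 1 := mul_le_mul_of_nonneg_left hc1 ht0.le
        have := htmle m
        rw [htdef] at *
        linarith
      · rw [hηd]
        rw [← Finset.sum_div, Finset.sum_sub_distrib, ← Finset.mul_sum, hπ.2, hξ.2]
        rw [mul_one]
        exact div_self (by linarith)
    have hmix : πM = fun ℓ => t * ξ ℓ + (1 - t) * η ℓ := by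
      funext ℓ
      rw [hηd]; dsimp only
      have : (1:ℝ) - t ≠ 0 := by linarith
      field_simp
      ring
    have hcon := MP.concave_s2 hM hu0 hC hv hδ₀ hξ hη ht0.le ht1.le
    rw [← hmix] at hcon
    have hLπ : (∑ ℓ, πM ℓ * c ℓ)
        = t * (∑ ℓ, ξ ℓ * c ℓ) + (1 - t) * (∑ ℓ, η ℓ * c ℓ) := by
      simp only [hmix]
      rw [Finset.mul_sum, Finset.mul_sum, ← Finset.sum_add_distrib]
      apply Finset.sum_congr rfl; intro ℓ _; ring
    have hηL := hL η hη
    have h1 : (1 - t) * (∑ ℓ, η ℓ * c ℓ) ≤ (1 - t) * v δ₀ η :=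
      mul_le_mul_of_nonneg_left hηL (by linarith)
    have h2 : t * v δ₀ ξ ≤ t * (∑ ℓ, ξ ℓ * c ℓ) := by
      rw [hπL] at hcon
      linarith
    exact le_of_mul_le_mul_left h2 ht0
  have hcrec : ∀ ℓ, c ℓ = (1 - δ₀) * u (MP.dir ℓ) + δ₀ * ∑ m, M ℓ m * c m := by
    intro ℓ
    have h1 := MP.dirac_value hM hu0 hC hv hδ₀ ℓ
    have h2 : v δ₀ (Matrix.vecMul (MP.dir ℓ) M)
        = ∑ m, (Matrix.vecMul (MP.dir ℓ) M) m * c m :=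
      hlin _ (MP.vecMul_mem_s2 hM (MP.dir_mem ℓ))
    rw [h2] at h1
    simp only [MP.dir_vecMul] at h1
    exact h1
  have hulin : ∀ ξ ∈ stdSimplex ℝ K, u ξ ≤ ∑ ℓ, ξ ℓ * u (MP.dir ℓ) := by
    intro ξ hξ
    have h1 := MP.value_ge hM hu0 hC hv hδ₀ hξ (MP.isSplit_trivial hξ)
    rw [MP.payoff_trivial] at h1
    rw [hlin ξ hξ, hlin _ (MP.vecMul_mem_s2 hM hξ)] at h1
    have hkey : (∑ ℓ, ξ ℓ * c ℓ)
        = (1 - δ₀) * (∑ ℓ, ξ ℓ * u (MP.dir ℓ)) + δ₀ * ∑ m, (Matrix.vecMul ξ M) m * c m := by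
      rw [MP.sum_vecMul_mul]
      rw [Finset.mul_sum, Finset.mul_sum, ← Finset.sum_add_distrib]
      apply Finset.sum_congr rfl; intro ℓ _
      rw [hcrec ℓ]; ring
    rw [hkey] at h1
    have h2 : (1 - δ₀) * u ξ ≤ (1 - δ₀) * ∑ ℓ, ξ ℓ * u (MP.dir ℓ) := by linarith
    exact le_of_mul_le_mul_left h2 (by linarith)
  -- Part 2 : at discount δ
  set x : K → ℝ := fun ℓ => v δ (MP.dir ℓ) with hxdef
  have hx0 : ∀ ℓ, 0 ≤ x ℓ := fun ℓ => ((hv δ hδm).1 _ (MP.dir_mem ℓ)).1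
  have hxlow : ∀ ℓ, (1 - δ) * u (MP.dir ℓ) + δ * (∑ m, M ℓ m * x m) ≤ x ℓ := by
    intro ℓ
    have h1 := MP.dirac_value hM hu0 hC hv hδm ℓ
    have h2 : (∑ m, (Matrix.vecMul (MP.dir ℓ) M) m * x m)
        ≤ v δ (Matrix.vecMul (MP.dir ℓ) M) :=
      MP.value_ge_dirac hM hu0 hC hv hδm (MP.vecMul_mem_s2 hM (MP.dir_mem ℓ))
    simp only [MP.dir_vecMul] at h1 h2
    have h3 : δ * (∑ m, M ℓ m * x m) ≤ δ * v δ (fun m => M ℓ m) :=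
      mul_le_mul_of_nonneg_left h2 hδm.1
    rw [hxdef]; dsimp only
    rw [h1]
    linarith
  -- contraction
  set T : Set ℝ := (fun ξ => v δ ξ - ∑ ℓ, ξ ℓ * x ℓ) '' (stdSimplex ℝ K) with hTdef
  have hTne : T.Nonempty := ⟨_, ⟨πM, hπ, rfl⟩⟩
  have hTbdd : BddAbove T := by
    refine ⟨C, ?_⟩
    rintro r ⟨ξ, hξ, rfl⟩
    have h1 := ((hv δ hδm).1 ξ hξ).2
    have h2 : 0 ≤ ∑ ℓ, ξ ℓ * x ℓ :=
      Finset.sum_nonneg fun ℓ _ => mul_nonneg (hξ.1 ℓ) (hx0 ℓ)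
    dsimp only
    linarith
  set D : ℝ := sSup T with hDdef
  have hle_D : ∀ ξ ∈ stdSimplex ℝ K, v δ ξ - (∑ ℓ, ξ ℓ * x ℓ) ≤ D :=
    fun ξ hξ => le_csSup hTbdd ⟨ξ, hξ, rfl⟩
  set z : K → ℝ := fun ℓ => (1 - δ) * u (MP.dir ℓ) + δ * ∑ m, M ℓ m * x m with hzdef
  have hz0 : ∀ ℓ, 0 ≤ z ℓ := by
    intro ℓ
    have hy0 : 0 ≤ ∑ m, M ℓ m * x m :=
      Finset.sum_nonneg fun m _ => mul_nonneg (hM.1 ℓ m) (hx0 m)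
    have hu1 := hu0 _ (MP.dir_mem ℓ)
    have e1 : 0 ≤ (1 - δ) * u (MP.dir ℓ) := mul_nonneg (by linarith [hδm.2]) hu1
    have e2 : 0 ≤ δ * ∑ m, M ℓ m * x m := mul_nonneg hδm.1 hy0
    rw [hzdef]; dsimp only; linarith
  have hzC : ∀ ℓ, z ℓ ≤ ∑ m, z m :=
    fun ℓ => Finset.single_le_sum (fun m _ => hz0 m) (Finset.mem_univ ℓ)
  have key : ∀ ξ ∈ stdSimplex ℝ K, v δ ξ ≤ (∑ ℓ, ξ ℓ * x ℓ) + δ * D := by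
    intro ξ hξ
    apply MP.value_le hv hδm hξ
    intro α ξs hs
    obtain ⟨hα0, hξs, hα1, hcomp⟩ := hs
    have hαs := MP.summable_of_tsum_one hα1
    have hPQ : ∀ s, α s * ((1 - δ) * u (ξs s) + δ * v δ (Matrix.vecMul (ξs s) M))
        ≤ α s * ((∑ ℓ, ξs s ℓ * z ℓ) + δ * D) := by
      intro s
      apply mul_le_mul_of_nonneg_left _ (hα0 s)
      have hu1 : u (ξs s) ≤ ∑ ℓ, ξs s ℓ * u (MP.dir ℓ) := hulin _ (hξs s)
      have hv1 : v δ (Matrix.vecMul (ξs s) M)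
          ≤ (∑ ℓ, (Matrix.vecMul (ξs s) M) ℓ * x ℓ) + D := by
        have := hle_D _ (MP.vecMul_mem_s2 hM (hξs s)); linarith
      have hrw : (∑ ℓ, (Matrix.vecMul (ξs s) M) ℓ * x ℓ)
          = ∑ m, ξs s m * ∑ ℓ, M m ℓ * x ℓ := MP.sum_vecMul_mul M (ξs s) x
      have hexp : (∑ ℓ, ξs s ℓ * z ℓ)
          = (1 - δ) * (∑ ℓ, ξs s ℓ * u (MP.dir ℓ)) + δ * ∑ m, ξs s m * ∑ ℓ, M m ℓ * x ℓ := by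
        rw [Finset.mul_sum, Finset.mul_sum, ← Finset.sum_add_distrib]
        apply Finset.sum_congr rfl; intro ℓ _
        rw [hzdef]; dsimp only; ring
      rw [hexp]
      have e1 : (1 - δ) * u (ξs s) ≤ (1 - δ) * ∑ ℓ, ξs s ℓ * u (MP.dir ℓ) :=
        mul_le_mul_of_nonneg_left hu1 (by linarith [hδm.2])
      have e2 : δ * v δ (Matrix.vecMul (ξs s) M)
          ≤ δ * ((∑ m, ξs s m * ∑ ℓ, M m ℓ * x ℓ) + D) := by
        apply mul_le_mul_of_nonneg_left _ hδm.1
        rw [← hrw]; exact hv1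
      linarith
    have hQsum1 : Summable fun s => α s * ∑ ℓ, ξs s ℓ * z ℓ :=
      MP.summable_mul hα0 hαs
        (fun s => Finset.sum_nonneg fun ℓ _ => mul_nonneg ((hξs s).1 ℓ) (hz0 ℓ))
        (fun s => Finset.sum_le_sum fun ℓ _ =>
          le_trans (mul_le_of_le_one_left (hz0 ℓ) (MP.comp_le_one (hξs s) ℓ)) (hzC ℓ))
    have hQsum2 : Summable fun s => α s * (δ * D) := hαs.mul_right _
    have hPsum : Summable fun s =>
        α s * ((1 - δ) * u (ξs s) + δ * v δ (Matrix.vecMul (ξs s) M)) :=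
      MP.summable_mul hα0 hαs (fun s => (MP.term_bounds hM hu0 hC hv hδm (hξs s)).1)
        (fun s => (MP.term_bounds hM hu0 hC hv hδm (hξs s)).2)
    have hsplit2 : (fun s => α s * ((∑ ℓ, ξs s ℓ * z ℓ) + δ * D))
        = fun s => α s * (∑ ℓ, ξs s ℓ * z ℓ) + α s * (δ * D) := by
      funext s; ring
    calc splitPayoff M u δ (v δ) α ξs
        ≤ ∑' s, α s * ((∑ ℓ, ξs s ℓ * z ℓ) + δ * D) :=
          Summable.tsum_le_tsum hPQ hPsum (by rw [hsplit2]; exact hQsum1.add hQsum2)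
      _ = (∑' s, α s * ∑ ℓ, ξs s ℓ * z ℓ) + ∑' s, α s * (δ * D) := by
          rw [hsplit2]; exact Summable.tsum_add hQsum1 hQsum2
      _ = (∑ ℓ, ξ ℓ * z ℓ) + δ * D := by
          rw [MP.tsum_split_linear ⟨hα0, hξs, hα1, hcomp⟩ z, tsum_mul_right, hα1, one_mul]
      _ ≤ (∑ ℓ, ξ ℓ * x ℓ) + δ * D := by
          have hzx : ∀ ℓ, ξ ℓ * z ℓ ≤ ξ ℓ * x ℓ := by
            intro ℓ
            apply mul_le_mul_of_nonneg_left _ (hξ.1 ℓ)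
            rw [hzdef]; dsimp only; exact hxlow ℓ
          have hss : (∑ ℓ, ξ ℓ * z ℓ) ≤ ∑ ℓ, ξ ℓ * x ℓ :=
            Finset.sum_le_sum fun ℓ _ => hzx ℓ
          linarith
  have hDcon : D ≤ δ * D := by
    rw [hDdef]
    apply csSup_le hTne
    rintro r ⟨ξ, hξ, rfl⟩
    have := key ξ hξ
    dsimp only
    linarith
  have hD0 : D ≤ 0 := by nlinarith
  have hvle : ∀ ξ ∈ stdSimplex ℝ K, v δ ξ ≤ ∑ ℓ, ξ ℓ * x ℓ := by
    intro ξ hξ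
    have := hle_D ξ hξ
    linarith
  have hxup : ∀ ℓ, x ℓ ≤ (1 - δ) * u (MP.dir ℓ) + δ * ∑ m, M ℓ m * x m := by
    intro ℓ
    have h1 := MP.dirac_value hM hu0 hC hv hδm ℓ
    have h2 := hvle _ (MP.vecMul_mem_s2 hM (MP.dir_mem ℓ))
    simp only [MP.dir_vecMul] at h1 h2
    have h3 : δ * v δ (fun m => M ℓ m) ≤ δ * ∑ m, M ℓ m * x m :=
      mul_le_mul_of_nonneg_left h2 hδm.1
    rw [hxdef]; dsimp only
    rw [h1]
    linarith
  have hxeq : ∀ ℓ, x ℓ = (1 - δ) * u (MP.dir ℓ) + δ * ∑ m, M ℓ m * x m :=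
    fun ℓ => le_antisymm (hxup ℓ) (hxlow ℓ)
  have hπsum : ∀ w : K → ℝ, (∑ ℓ, πM ℓ * ∑ m, M ℓ m * w m) = ∑ ℓ, πM ℓ * w ℓ := by
    intro w
    rw [← MP.sum_vecMul_mul M πM w, hπinv]
  have hSx : (∑ ℓ, πM ℓ * x ℓ) = ∑ ℓ, πM ℓ * u (MP.dir ℓ) := by
    have h1 : (∑ ℓ, πM ℓ * x ℓ)
        = (1 - δ) * (∑ ℓ, πM ℓ * u (MP.dir ℓ)) + δ * ∑ ℓ, πM ℓ * x ℓ := by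
      calc ∑ ℓ, πM ℓ * x ℓ
          = ∑ ℓ, ((1 - δ) * (πM ℓ * u (MP.dir ℓ)) + δ * (πM ℓ * ∑ m, M ℓ m * x m)) := by
            apply Finset.sum_congr rfl; intro ℓ _; rw [hxeq ℓ]; ring
        _ = (1 - δ) * (∑ ℓ, πM ℓ * u (MP.dir ℓ)) + δ * ∑ ℓ, πM ℓ * ∑ m, M ℓ m * x m := by
            rw [Finset.sum_add_distrib, Finset.mul_sum, Finset.mul_sum]
        _ = (1 - δ) * (∑ ℓ, πM ℓ * u (MP.dir ℓ)) + δ * ∑ ℓ, πM ℓ * x ℓ := by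
            rw [hπsum x]
    have h2 : (1 - δ) * (∑ ℓ, πM ℓ * x ℓ) = (1 - δ) * (∑ ℓ, πM ℓ * u (MP.dir ℓ)) := by
      nlinarith [h1]
    exact mul_left_cancel₀ (sub_ne_zero_of_ne (ne_of_gt hδ1)) h2
  have hΦδ : Φ δ = ∑ ℓ, πM ℓ * u (MP.dir ℓ) := by
    rw [hΦ δ]
    apply le_antisymm
    · exact (hvle πM hπ).trans (le_of_eq hSx)
    · rw [← hSx]
      exact MP.value_ge_dirac hM hu0 hC hv hδm hπ
  have hΨδ : Ψ δ = ∑ ℓ, πM ℓ * u (MP.dir ℓ) := by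
    rw [hΨ' δ]
    exact hSx
  have hπc : (∑ ℓ, πM ℓ * c ℓ) = ∑ ℓ, πM ℓ * u (MP.dir ℓ) := by
    have h1 : (∑ ℓ, πM ℓ * c ℓ)
        = (1 - δ₀) * (∑ ℓ, πM ℓ * u (MP.dir ℓ)) + δ₀ * ∑ ℓ, πM ℓ * c ℓ := by
      calc ∑ ℓ, πM ℓ * c ℓ
          = ∑ ℓ, ((1 - δ₀) * (πM ℓ * u (MP.dir ℓ)) + δ₀ * (πM ℓ * ∑ m, M ℓ m * c m)) := by
            apply Finset.sum_congr rfl; intro ℓ _; rw [hcrec ℓ]; ring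
        _ = (1 - δ₀) * (∑ ℓ, πM ℓ * u (MP.dir ℓ)) + δ₀ * ∑ ℓ, πM ℓ * ∑ m, M ℓ m * c m := by
            rw [Finset.sum_add_distrib, Finset.mul_sum, Finset.mul_sum]
        _ = (1 - δ₀) * (∑ ℓ, πM ℓ * u (MP.dir ℓ)) + δ₀ * ∑ ℓ, πM ℓ * c ℓ := by
            rw [hπsum c]
    have h2 : (1 - δ₀) * (∑ ℓ, πM ℓ * c ℓ) = (1 - δ₀) * (∑ ℓ, πM ℓ * u (MP.dir ℓ)) := by
      nlinarith [h1]
    exact mul_left_cancel₀ (sub_ne_zero_of_ne (ne_of_gt hδ₀1)) h2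
  have hΦδ₀ : Φ δ₀ = ∑ ℓ, πM ℓ * u (MP.dir ℓ) := by
    rw [hΦ δ₀, hπL, hπc]
  exact ⟨hΦδ.trans hΦδ₀.symm, hΨδ.trans hΦδ₀.symm⟩
end
end
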